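/- Projections of sequential compositions of typable g-choreographies: suppose Π1 ⊢ G1 : ⟨φ1,Λ1⟩ and Π2 ⊢ G2 : ⟨φ2,Λ2⟩ are derivable for ground g-choreographies G1, G2. Then for every participant A ∈ Π1 ∪ Π2: the labels of the minimal events of ⟦G1;G2⟧↾A equal the labels of the minimal events of ⟦G1⟧↾A if A ∈ Π1, and equal the labels of the minimal events of ⟦G2⟧↾A otherwise; dually, the labels of the maximal events of ⟦G1;G2⟧↾A equal the labels of the maximal events of ⟦G2⟧↾A if A ∈ Π2, and equal the labels of the maximal events of ⟦G1⟧↾A otherwise. -/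

import Mathlib

open scoped Classical

namespace Choreo

/-! ## Labels -/

/-- Communication labels: output `A B!m` and input `A B?m`. -/
inductive Label (P M : Type) where
  | out : P → P → M → Label P M
  | inp : P → P → M → Label P M

variable {P M : Type}

/-- The subject of a label: the sender of an output, the receiver of an input. -/
def Label.sbj : Label P M → P
  | .out a _ _ => a
  | .inp _ b _ => b

/-- The set `L^!` of output labels (sender and receiver distinct). -/
def Lout : Set (Label P M) := {l | ∃ a b m, a ≠ b ∧ l = .out a b m}

/-- The set `L^?` of input labels (sender and receiver distinct). -/
def Lin : Set (Label P M) := {l | ∃ a b m, a ≠ b ∧ l = .inp a b m}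

/-- `L̂(A)`: the labels in `L` whose subject is `A`. -/
def hat (L : Set (Label P M)) (A : P) : Set (Label P M) := {l ∈ L | l.sbj = A}

/-- `sbj(L)`: the set of subjects of the labels in `L`. -/
def sbjSet (L : Set (Label P M)) : Set P := Label.sbj '' L

/-- `L − Π`: the labels in `L` whose subject is not in `Π`. -/
def lminus (L : Set (Label P M)) (Γ : Set P) : Set (Label P M) := {l ∈ L | l.sbj ∉ Γ}

/-! ## Labelled event structures (events drawn from ℕ) -/

/-- Data of a labelled (prime) event structure over events drawn from `ℕ`. -/
structure ES (P M : Type) where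
  ev : Set ℕ
  le : ℕ → ℕ → Prop
  conf : ℕ → ℕ → Prop
  lbl : ℕ → Label P M

namespace ES

variable (E : ES P M)

/-- Configurations: downward-closed conflict-free sets of events. -/
def Config (x : Set ℕ) : Prop :=
  x ⊆ E.ev ∧ (∀ e ∈ x, ∀ f ∈ E.ev, E.le f e → f ∈ x) ∧
    ∀ e ∈ x, ∀ f ∈ x, ¬ E.conf e f

/-- `MaxC E`: the ⊆-maximal configurations of `E`. -/
def MaxC : Set (Set ℕ) := {x | E.Config x ∧ ∀ y, E.Config y → x ⊆ y → y = x}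

/-- Minimal events of `s ⊆ E.ev` with respect to `E.le`. -/
def minIn (s : Set ℕ) : Set ℕ := {e ∈ s | ∀ f ∈ s, E.le f e → f = e}

/-- Maximal events of `s ⊆ E.ev` with respect to `E.le`. -/
def maxIn (s : Set ℕ) : Set ℕ := {e ∈ s | ∀ f ∈ s, E.le e f → f = e}

def minEv : Set ℕ := E.minIn E.ev
def maxEv : Set ℕ := E.maxIn E.ev

/-- Labels of the minimal events of `E`. -/
def minLbl : Set (Label P M) := E.lbl '' E.minEv

/-- Labels of the maximal events of `E`. -/
def maxLbl : Set (Label P M) := E.lbl '' E.maxEv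

/-- All labels occurring in `E`. -/
def lblSet : Set (Label P M) := E.lbl '' E.ev

/-- The projection `E↾A`: the restriction of `E` to the events whose label has subject `A`. -/
def proj (A : P) : ES P M where
  ev := {e ∈ E.ev | (E.lbl e).sbj = A}
  le u v := E.le u v ∧ (u ∈ E.ev ∧ (E.lbl u).sbj = A) ∧ (v ∈ E.ev ∧ (E.lbl v).sbj = A)
  conf u v := E.conf u v ∧ (u ∈ E.ev ∧ (E.lbl u).sbj = A) ∧ (v ∈ E.ev ∧ (E.lbl v).sbj = A)
  lbl := E.lbl

/-- The projection `x↾A` of a configuration (as a set of events of `E`). -/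
def projC (x : Set ℕ) (A : P) : Set ℕ := {e ∈ x | (E.lbl e).sbj = A}

end ES

/-! ## Constructions on event structures -/

/-- Tag for the events of a left component. -/
def tagL (e : ℕ) : ℕ := Nat.pair 0 e
/-- Tag for the events of a right component. -/
def tagR (e : ℕ) : ℕ := Nat.pair 1 e
/-- Tag for the events of the copy of the second component indexed by (the code of) a
maximal configuration of the first one. -/
def tagC (k e : ℕ) : ℕ := Nat.pair 1 (Nat.pair k e)

/-- A code (injective on finite sets) of sets of naturals. -/
noncomputable def encSet (x : Set ℕ) : ℕ :=
  if h : x.Finite then h.toFinset.sum (fun n => 2 ^ n) else 0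

/-- The empty event structure `ε`. -/
noncomputable def esEmpty [Nonempty P] [Nonempty M] : ES P M where
  ev := ∅
  le _ _ := False
  conf _ _ := False
  lbl _ := Label.out Classical.ofNonempty Classical.ofNonempty Classical.ofNonempty

/-- `⟦A→B:m⟧`: two ordered events labelled `A B!m < A B?m`. -/
def esAct (a b : P) (m : M) : ES P M where
  ev := {0, 1}
  le u v := (u = 0 ∧ v = 0) ∨ (u = 0 ∧ v = 1) ∨ (u = 1 ∧ v = 1)
  conf _ _ := False
  lbl e := if e = 0 then Label.out a b m else Label.inp a b m

/-- Tensor product `E1 ⊗ E2` (componentwise disjoint union). -/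
def esTensor (E1 E2 : ES P M) : ES P M where
  ev := (tagL '' E1.ev) ∪ (tagR '' E2.ev)
  le u v := (∃ e ∈ E1.ev, ∃ f ∈ E1.ev, E1.le e f ∧ u = tagL e ∧ v = tagL f) ∨
            (∃ e ∈ E2.ev, ∃ f ∈ E2.ev, E2.le e f ∧ u = tagR e ∧ v = tagR f)
  conf u v := (∃ e ∈ E1.ev, ∃ f ∈ E1.ev, E1.conf e f ∧ u = tagL e ∧ v = tagL f) ∨
              (∃ e ∈ E2.ev, ∃ f ∈ E2.ev, E2.conf e f ∧ u = tagR e ∧ v = tagR f)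
  lbl u := if (Nat.unpair u).1 = 0 then E1.lbl (Nat.unpair u).2 else E2.lbl (Nat.unpair u).2

/-- Sum `E1 + E2`: disjoint union with all cross pairs of events in conflict. -/
def esSum (E1 E2 : ES P M) : ES P M :=
  { esTensor E1 E2 with
    conf := fun u v => (esTensor E1 E2).conf u v ∨
      (∃ e ∈ E1.ev, ∃ f ∈ E2.ev, (u = tagL e ∧ v = tagR f) ∨ (u = tagR f ∧ v = tagL e)) }

/-- Sequential composition: appends to each maximal configuration `x` of `E1` a disjoint
copy of `E2`, ordering an event of `x` below an event of the copy whenever their labels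
have the same subject. -/
noncomputable def esSeq (E1 E2 : ES P M) : ES P M where
  ev := (tagL '' E1.ev) ∪ {u | ∃ x ∈ E1.MaxC, ∃ e ∈ E2.ev, u = tagC (encSet x) e}
  le u v :=
    (∃ e ∈ E1.ev, ∃ f ∈ E1.ev, E1.le e f ∧ u = tagL e ∧ v = tagL f) ∨
    (∃ x ∈ E1.MaxC, ∃ e ∈ E2.ev, ∃ f ∈ E2.ev, E2.le e f ∧
       u = tagC (encSet x) e ∧ v = tagC (encSet x) f) ∨
    (∃ x ∈ E1.MaxC, ∃ e ∈ x, ∃ f ∈ E2.ev, (E1.lbl e).sbj = (E2.lbl f).sbj ∧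
       u = tagL e ∧ v = tagC (encSet x) f)
  conf u v :=
    (∃ e ∈ E1.ev, ∃ f ∈ E1.ev, E1.conf e f ∧ u = tagL e ∧ v = tagL f) ∨
    (∃ x ∈ E1.MaxC, ∃ e ∈ E2.ev, ∃ f ∈ E2.ev, E2.conf e f ∧
       u = tagC (encSet x) e ∧ v = tagC (encSet x) f) ∨
    (∃ x ∈ E1.MaxC, ∃ x' ∈ E1.MaxC, x ≠ x' ∧ ∃ e ∈ E2.ev, ∃ f ∈ E2.ev,
       u = tagC (encSet x) e ∧ v = tagC (encSet x') f) ∨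
    (∃ x ∈ E1.MaxC, ∃ e ∈ E1.ev, (∃ e' ∈ x, E1.conf e e') ∧ ∃ f ∈ E2.ev,
       ((u = tagL e ∧ v = tagC (encSet x) f) ∨ (u = tagC (encSet x) f ∧ v = tagL e)))
  lbl u := if (Nat.unpair u).1 = 0 then E1.lbl (Nat.unpair u).2
           else E2.lbl (Nat.unpair (Nat.unpair u).2).2

/-! ## Well-branchedness -/

/-- Labels of the minimal events of the projection `E↾A`. -/
def minLblP (E : ES P M) (A : P) : Set (Label P M) := (E.proj A).minLbl

/-- `A` is active for the branches `E1`, `E2`. -/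
def active (E1 E2 : ES P M) (A : P) : Prop :=
  minLblP E1 A ≠ ∅ ∧ minLblP E2 A ≠ ∅ ∧
  Disjoint (minLblP E1 A) (minLblP E2 A) ∧
  minLblP E1 A ∪ minLblP E2 A ⊆ Lout

/-- `B` is passive for the branches `E1`, `E2`. -/
def passive (E1 E2 : ES P M) (B : P) : Prop :=
  Disjoint (minLblP E1 B) (minLblP E2 B) ∧
  minLblP E1 B ∪ minLblP E2 B ⊆ Lin ∧
  (minLblP E1 B = ∅ ↔ minLblP E2 B = ∅)

/-- Well-branchedness: a unique active participant, all other participants passive. -/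
def wb (E1 E2 : ES P M) : Prop :=
  ∃ A, active E1 E2 A ∧ (∀ A', active E1 E2 A' → A' = A) ∧
    ∀ B, B ≠ A → passive E1 E2 B

/-! ## Ground g-choreographies and their semantics -/

/-- Ground g-choreographies: `G ::= 0 | A→B:m | G;G | G|G | G+G`. -/
inductive GC (P M : Type) where
  | nil : GC P M
  | act : P → P → M → GC P M
  | seq : GC P M → GC P M → GC P M
  | par : GC P M → GC P M → GC P M
  | cho : GC P M → GC P M → GC P M

/-- `P(G)`: the participants occurring in `G`. -/
def parts : GC P M → Set P
  | .nil => ∅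
  | .act a b _ => {a, b}
  | .seq g1 g2 => parts g1 ∪ parts g2
  | .par g1 g2 => parts g1 ∪ parts g2
  | .cho g1 g2 => parts g1 ∪ parts g2

/-- The semantics `⟦G⟧`: a labelled event structure, or `none` (i.e. `⊥`) when a side
condition fails (the grammar requires `A ≠ B` in interactions; parallel requires disjoint
label sets; choice requires well-branchedness). -/
noncomputable def gsem [Nonempty P] [Nonempty M] : GC P M → Option (ES P M)
  | .nil => some esEmpty
  | .act a b m => if a = b then none else some (esAct a b m)
  | .seq g1 g2 =>
      match gsem g1, gsem g2 with
      | some E1, some E2 => some (esSeq E1 E2)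
      | _, _ => none
  | .par g1 g2 =>
      match gsem g1, gsem g2 with
      | some E1, some E2 =>
          if Disjoint E1.lblSet E2.lblSet then some (esTensor E1 E2) else none
      | _, _ => none
  | .cho g1 g2 =>
      match gsem g1, gsem g2 with
      | some E1, some E2 => if wb E1 E2 then some (esSum E1 E2) else none
      | _, _ => none

/-! ## The typing system -/

/-- Output uniform sets of labels. -/
def outUniform (U V : Set (Label P M)) : Prop := Disjoint U V ∧ U ∪ V ⊆ Lout

/-- Input uniform sets of labels. -/
def inUniform (U V : Set (Label P M)) : Prop := Disjoint U V ∧ U ∪ V ⊆ Lin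

/-- The compatibility condition `compch(φ1,φ2,Π)` of rule t-ch. -/
def compch (φ1 φ2 : Set (Label P M)) (Γ : Set P) : Prop :=
  ∃ A ∈ Γ,
    (outUniform (hat φ1 A) (hat φ2 A) ∧ hat φ1 A ≠ ∅ ∧ hat φ2 A ≠ ∅) ∧
    (∀ A' ∈ Γ, (outUniform (hat φ1 A') (hat φ2 A') ∧ hat φ1 A' ≠ ∅ ∧ hat φ2 A' ≠ ∅) →
        A' = A) ∧
    ∀ B ∈ Γ, B ≠ A →
      inUniform (hat φ1 B) (hat φ2 B) ∧ (hat φ1 B = ∅ ↔ hat φ2 B = ∅)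

/-- The typing judgement `Π ⊢ G : ⟨φ,Λ⟩`. -/
inductive Typing : Set P → GC P M → Set (Label P M) → Set (Label P M) → Prop where
  | temp : Typing ∅ GC.nil ∅ ∅
  | tint {a b : P} {m : M} (hab : a ≠ b) :
      Typing {a, b} (GC.act a b m)
        {Label.out a b m, Label.inp a b m} {Label.out a b m, Label.inp a b m}
  | tseq {Γ1 Γ2 : Set P} {g1 g2 : GC P M} {φ1 φ2 Λ1 Λ2 : Set (Label P M)} :
      Typing Γ1 g1 φ1 Λ1 → Typing Γ2 g2 φ2 Λ2 →
      Typing (Γ1 ∪ Γ2) (GC.seq g1 g2) (φ1 ∪ lminus φ2 Γ1) (Λ2 ∪ lminus Λ1 Γ2)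
  | tpar {Γ1 Γ2 : Set P} {g1 g2 : GC P M} {φ1 φ2 Λ1 Λ2 : Set (Label P M)} :
      Typing Γ1 g1 φ1 Λ1 → Typing Γ2 g2 φ2 Λ2 → Γ1 ∩ Γ2 = ∅ →
      Typing (Γ1 ∪ Γ2) (GC.par g1 g2) (φ1 ∪ φ2) (Λ1 ∪ Λ2)
  | tch {Γ : Set P} {g1 g2 : GC P M} {φ1 φ2 Λ1 Λ2 : Set (Label P M)} :
      Typing Γ g1 φ1 Λ1 → Typing Γ g2 φ2 Λ2 → compch φ1 φ2 Γ →
      Typing Γ (GC.cho g1 g2) (φ1 ∪ φ2) (Λ1 ∪ Λ2)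


/-! ## One-hole contexts and their typing (hole axiom `Γh ⊢ [·] : ⟨φh,Λh⟩`) -/

/-- g-choreography contexts with a single hole. -/
inductive Ctx (P M : Type) where
  | hole : Ctx P M
  | seqL : Ctx P M → GC P M → Ctx P M
  | seqR : GC P M → Ctx P M → Ctx P M
  | parL : Ctx P M → GC P M → Ctx P M
  | parR : GC P M → Ctx P M → Ctx P M
  | choL : Ctx P M → GC P M → Ctx P M
  | choR : GC P M → Ctx P M → Ctx P M

/-- `C.fill g = C[g]`, the replacement of the hole of `C` by `g`. -/
def Ctx.fill : Ctx P M → GC P M → GC P M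
  | .hole, g => g
  | .seqL c g2, g => GC.seq (c.fill g) g2
  | .seqR g1 c, g => GC.seq g1 (c.fill g)
  | .parL c g2, g => GC.par (c.fill g) g2
  | .parR g1 c, g => GC.par g1 (c.fill g)
  | .choL c g2, g => GC.cho (c.fill g) g2
  | .choR g1 c, g => GC.cho g1 (c.fill g)

/-- Typing of one-hole contexts in the type system extended with the axiom
`Γh ⊢ [·] : ⟨φh,Λh⟩` for the hole. -/
inductive CTyping (Γh : Set P) (φh Λh : Set (Label P M)) :
    Set P → Ctx P M → Set (Label P M) → Set (Label P M) → Prop where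
  | hole : CTyping Γh φh Λh Γh Ctx.hole φh Λh
  | seqL {Γ1 Γ2 : Set P} {c : Ctx P M} {g : GC P M} {φ1 φ2 Λ1 Λ2 : Set (Label P M)} :
      CTyping Γh φh Λh Γ1 c φ1 Λ1 → Typing Γ2 g φ2 Λ2 →
      CTyping Γh φh Λh (Γ1 ∪ Γ2) (Ctx.seqL c g) (φ1 ∪ lminus φ2 Γ1) (Λ2 ∪ lminus Λ1 Γ2)
  | seqR {Γ1 Γ2 : Set P} {g : GC P M} {c : Ctx P M} {φ1 φ2 Λ1 Λ2 : Set (Label P M)} :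
      Typing Γ1 g φ1 Λ1 → CTyping Γh φh Λh Γ2 c φ2 Λ2 →
      CTyping Γh φh Λh (Γ1 ∪ Γ2) (Ctx.seqR g c) (φ1 ∪ lminus φ2 Γ1) (Λ2 ∪ lminus Λ1 Γ2)
  | parL {Γ1 Γ2 : Set P} {c : Ctx P M} {g : GC P M} {φ1 φ2 Λ1 Λ2 : Set (Label P M)} :
      CTyping Γh φh Λh Γ1 c φ1 Λ1 → Typing Γ2 g φ2 Λ2 → Γ1 ∩ Γ2 = ∅ →
      CTyping Γh φh Λh (Γ1 ∪ Γ2) (Ctx.parL c g) (φ1 ∪ φ2) (Λ1 ∪ Λ2)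
  | parR {Γ1 Γ2 : Set P} {g : GC P M} {c : Ctx P M} {φ1 φ2 Λ1 Λ2 : Set (Label P M)} :
      Typing Γ1 g φ1 Λ1 → CTyping Γh φh Λh Γ2 c φ2 Λ2 → Γ1 ∩ Γ2 = ∅ →
      CTyping Γh φh Λh (Γ1 ∪ Γ2) (Ctx.parR g c) (φ1 ∪ φ2) (Λ1 ∪ Λ2)
  | choL {Γ : Set P} {c : Ctx P M} {g : GC P M} {φ1 φ2 Λ1 Λ2 : Set (Label P M)} :
      CTyping Γh φh Λh Γ c φ1 Λ1 → Typing Γ g φ2 Λ2 → compch φ1 φ2 Γ →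
      CTyping Γh φh Λh Γ (Ctx.choL c g) (φ1 ∪ φ2) (Λ1 ∪ Λ2)
  | choR {Γ : Set P} {g : GC P M} {c : Ctx P M} {φ1 φ2 Λ1 Λ2 : Set (Label P M)} :
      Typing Γ g φ1 Λ1 → CTyping Γh φh Λh Γ c φ2 Λ2 → compch φ1 φ2 Γ →
      CTyping Γh φh Λh Γ (Ctx.choR g c) (φ1 ∪ φ2) (Λ1 ∪ Λ2)

/-! ## Refinable actions, t-ref, and refinement -/

/-- The three side conditions of the axiom schema t-ref for the refinable action
`A → m1…mn : B1,…,Bn`, represented by the initiator `A` and the nonempty list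
`l = [(m1,B1),…,(mn,Bn)]` with pairwise distinct `Bi`. -/
def trefCond (Γ : Set P) (φ Λ : Set (Label P M)) (A : P) (l : List (M × P)) : Prop :=
  l ≠ [] ∧ (l.map Prod.snd).Nodup ∧
  sbjSet φ = Γ ∧ sbjSet Λ = Γ ∧ sbjSet (φ ∩ Lout) = {A} ∧
  ∀ p ∈ l, ∃ C ∈ Γ, hat Λ p.2 = {Label.inp C p.2 p.1}

/-- `G ref A→m1…mn:B1,…,Bn`: the ground g-choreography `G` refines the refinable action
given by initiator `A` and list `l = [(m1,B1),…,(mn,Bn)]`. -/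
def Refines [Nonempty P] [Nonempty M] (G : GC P M) (A : P) (l : List (M × P)) : Prop :=
  ∃ E : ES P M, gsem G = some E ∧
    sbjSet E.minLbl = {A} ∧
    ∀ x ∈ E.MaxC, ∀ p ∈ l, ∃ C ∈ parts G,
      Label.inp C p.2 p.1 ∈ E.lbl '' (E.maxIn (E.projC x p.2))

/-! ## Multi-hole contexts -/

/-- g-choreography contexts with (numbered) holes. -/
inductive MCtx (P M : Type) where
  | hole : ℕ → MCtx P M
  | nil : MCtx P M
  | act : P → P → M → MCtx P M
  | seq : MCtx P M → MCtx P M → MCtx P M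
  | par : MCtx P M → MCtx P M → MCtx P M
  | cho : MCtx P M → MCtx P M → MCtx P M

/-- The (indices of the) holes occurring in a multi-hole context. -/
def MCtx.holes : MCtx P M → List ℕ
  | .hole i => [i]
  | .nil => []
  | .act _ _ _ => []
  | .seq c1 c2 => c1.holes ++ c2.holes
  | .par c1 c2 => c1.holes ++ c2.holes
  | .cho c1 c2 => c1.holes ++ c2.holes

/-- `C.fill g`: replace each hole `[·]i` by `g i`. -/
def MCtx.fill : MCtx P M → (ℕ → GC P M) → GC P M
  | .hole i, g => g i
  | .nil, _ => GC.nil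
  | .act a b m, _ => GC.act a b m
  | .seq c1 c2, g => GC.seq (c1.fill g) (c2.fill g)
  | .par c1 c2, g => GC.par (c1.fill g) (c2.fill g)
  | .cho c1 c2, g => GC.cho (c1.fill g) (c2.fill g)

/-- Typing of multi-hole contexts in the extended type system, where hole `i` is typed by
the axiom `(σ i).1 ⊢ [·]i : ⟨(σ i).2.1, (σ i).2.2⟩`. -/
inductive MTyping (σ : ℕ → Set P × Set (Label P M) × Set (Label P M)) :
    Set P → MCtx P M → Set (Label P M) → Set (Label P M) → Prop where
  | hole (i : ℕ) : MTyping σ (σ i).1 (MCtx.hole i) (σ i).2.1 (σ i).2.2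
  | temp : MTyping σ ∅ MCtx.nil ∅ ∅
  | tint {a b : P} {m : M} (hab : a ≠ b) :
      MTyping σ {a, b} (MCtx.act a b m)
        {Label.out a b m, Label.inp a b m} {Label.out a b m, Label.inp a b m}
  | tseq {Γ1 Γ2 : Set P} {c1 c2 : MCtx P M} {φ1 φ2 Λ1 Λ2 : Set (Label P M)} :
      MTyping σ Γ1 c1 φ1 Λ1 → MTyping σ Γ2 c2 φ2 Λ2 →
      MTyping σ (Γ1 ∪ Γ2) (MCtx.seq c1 c2) (φ1 ∪ lminus φ2 Γ1) (Λ2 ∪ lminus Λ1 Γ2)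
  | tpar {Γ1 Γ2 : Set P} {c1 c2 : MCtx P M} {φ1 φ2 Λ1 Λ2 : Set (Label P M)} :
      MTyping σ Γ1 c1 φ1 Λ1 → MTyping σ Γ2 c2 φ2 Λ2 → Γ1 ∩ Γ2 = ∅ →
      MTyping σ (Γ1 ∪ Γ2) (MCtx.par c1 c2) (φ1 ∪ φ2) (Λ1 ∪ Λ2)
  | tch {Γ : Set P} {c1 c2 : MCtx P M} {φ1 φ2 Λ1 Λ2 : Set (Label P M)} :
      MTyping σ Γ c1 φ1 Λ1 → MTyping σ Γ c2 φ2 Λ2 → compch φ1 φ2 Γ →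
      MTyping σ Γ (MCtx.cho c1 c2) (φ1 ∪ φ2) (Λ1 ∪ Λ2)

/-! ## Auxiliary development for the proof -/

section Aux

variable {P M : Type}

@[simp] lemma Label.sbj_out (a b : P) (m : M) : (Label.out a b m).sbj = a := rfl
@[simp] lemma Label.sbj_inp (a b : P) (m : M) : (Label.inp a b m).sbj = b := rfl

lemma tagL_inj {e f : ℕ} (h : tagL e = tagL f) : e = f := by
  simpa [tagL, Nat.pair_eq_pair] using h

lemma tagR_inj {e f : ℕ} (h : tagR e = tagR f) : e = f := by
  simpa [tagR, Nat.pair_eq_pair] using h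

lemma tagL_ne_tagR {e f : ℕ} : tagL e ≠ tagR f := by
  simp [tagL, tagR, Nat.pair_eq_pair]

lemma tagL_ne_tagC {e k f : ℕ} : tagL e ≠ tagC k f := by
  simp [tagL, tagC, Nat.pair_eq_pair]

lemma tagC_eq_tagC {k e k' e' : ℕ} : tagC k e = tagC k' e' ↔ k = k' ∧ e = e' := by
  simp [tagC, Nat.pair_eq_pair]

lemma sum_two_pow_inj {s t : Finset ℕ}
    (h : s.sum (fun n => 2 ^ n) = t.sum (fun n => 2 ^ n)) : s = t := by
  have key : ∀ u : Finset ℕ, ((u.sort (· ≤ ·)).map (fun i => 2 ^ i)).sum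
      = u.sum (fun n => 2 ^ n) := by
    intro u
    rw [← Finset.sum_map_toList]
    exact List.Perm.sum_eq ((Finset.sort_perm_toList u (· ≤ ·)).map _)
  have h2 : s.sort (· ≤ ·) = t.sort (· ≤ ·) := by
    have hs := Nat.bitIndices_twoPowsum (Finset.sortedLT_sort s)
    have ht := Nat.bitIndices_twoPowsum (Finset.sortedLT_sort t)
    rw [key s] at hs; rw [key t] at ht
    rw [← hs, ← ht, h]
  have : s.val = t.val := by
    rw [← Finset.sort_eq s (· ≤ ·), ← Finset.sort_eq t (· ≤ ·), h2]
  exact Finset.eq_of_veq this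

lemma encSet_eq {x : Set ℕ} (hx : x.Finite) :
    encSet x = hx.toFinset.sum (fun n => 2 ^ n) := by
  simp only [encSet, dif_pos hx]

lemma encSet_inj {x y : Set ℕ} (hx : x.Finite) (hy : y.Finite)
    (h : encSet x = encSet y) : x = y := by
  rw [encSet_eq hx, encSet_eq hy] at h
  have := sum_two_pow_inj h
  have := congrArg (fun s : Finset ℕ => (s : Set ℕ)) this
  simpa [Set.Finite.coe_toFinset] using this

/-! ### `hat` computations -/

lemma hat_union (s t : Set (Label P M)) (A : P) :
    hat (s ∪ t) A = hat s A ∪ hat t A := by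
  ext l; simp only [hat, Set.mem_setOf_eq, Set.mem_union]; tauto

lemma hat_lminus_of_mem {φ : Set (Label P M)} {Γ : Set P} {A : P} (h : A ∈ Γ) :
    hat (lminus φ Γ) A = ∅ := by
  ext l
  simp only [hat, lminus, Set.mem_setOf_eq, Set.mem_empty_iff_false, iff_false]
  rintro ⟨⟨-, hns⟩, hs⟩
  exact hns (hs ▸ h)

lemma hat_lminus_of_not_mem {φ : Set (Label P M)} {Γ : Set P} {A : P} (h : A ∉ Γ) :
    hat (lminus φ Γ) A = hat φ A := by
  ext l
  simp only [hat, lminus, Set.mem_setOf_eq]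
  constructor
  · rintro ⟨⟨hl, -⟩, hs⟩; exact ⟨hl, hs⟩
  · rintro ⟨hl, hs⟩; exact ⟨⟨hl, fun hm => h (hs ▸ hm)⟩, hs⟩

/-! ### Generic event-structure lemmas -/

namespace ES

variable (E : ES P M)

lemma config_empty : E.Config ∅ :=
  ⟨by simp, by simp, by simp⟩

lemma maxc_subset {x : Set ℕ} (h : x ∈ E.MaxC) : x ⊆ E.ev := h.1.1

lemma exists_maxc (hfin : E.ev.Finite) {x : Set ℕ} (hx : E.Config x) :
    ∃ y ∈ E.MaxC, x ⊆ y := by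
  have hS : {y | E.Config y ∧ x ⊆ y}.Finite :=
    hfin.finite_subsets.subset (fun y hy => hy.1.1)
  obtain ⟨y, hy, hmax⟩ :=
    Set.Finite.exists_maximalFor id _ hS ⟨x, hx, subset_rfl⟩
  exact ⟨y, ⟨hy.1, fun z hz hyz => Set.Subset.antisymm (hmax ⟨hz, hy.2.trans hyz⟩ hyz) hyz⟩, hy.2⟩

lemma maxc_nonempty (hfin : E.ev.Finite) : ∃ y, y ∈ E.MaxC := by
  obtain ⟨y, hy, -⟩ := E.exists_maxc hfin E.config_empty
  exact ⟨y, hy⟩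

lemma conf_of_rtg (hher : ∀ {e f g}, E.conf e f → E.le f g → E.conf e g)
    {u v w : ℕ} (hc : E.conf u v) (hr : Relation.ReflTransGen E.le v w) :
    E.conf u w := by
  induction hr with
  | refl => exact hc
  | tail _ h2 ih => exact hher ih h2

lemma mem_maxc (hfin : E.ev.Finite) (hirr : ∀ e, ¬ E.conf e e)
    (hsym : ∀ {e f}, E.conf e f → E.conf f e)
    (hher : ∀ {e f g}, E.conf e f → E.le f g → E.conf e g)
    {e : ℕ} (he : e ∈ E.ev) : ∃ x ∈ E.MaxC, e ∈ x := by
  have hcfg : E.Config {f | f ∈ E.ev ∧ Relation.ReflTransGen E.le f e} := by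
    refine ⟨fun f hf => hf.1,
      fun a ha f hf hle => ⟨hf, Relation.ReflTransGen.head hle ha.2⟩, ?_⟩
    intro a ha b hb hc
    have h1 : E.conf a e := E.conf_of_rtg hher hc hb.2
    have h2 : E.conf e e := E.conf_of_rtg hher (hsym h1) ha.2
    exact hirr e h2
  obtain ⟨x, hx, hsub⟩ := E.exists_maxc hfin hcfg
  exact ⟨x, hx, hsub ⟨he, Relation.ReflTransGen.refl⟩⟩

lemma minLbl_proj_empty {A : P} (h : ∀ e ∈ E.ev, (E.lbl e).sbj ≠ A) :
    (E.proj A).minLbl = ∅ := by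
  have : (E.proj A).ev = ∅ := by
    ext e
    simp only [proj, Set.mem_setOf_eq, Set.mem_empty_iff_false, iff_false]
    rintro ⟨he, hs⟩; exact h e he hs
  have h2 : (E.proj A).minEv = ∅ := by
    rw [minEv, minIn, this]; ext u; simp
  rw [minLbl, h2]; simp

end ES

/-- The sanity invariant maintained for the semantics of typable g-choreographies. -/
structure Good (E : ES P M) (Γ : Set P) (φ : Set (Label P M)) : Prop where
  fin : E.ev.Finite
  irrefl : ∀ e, ¬ E.conf e e
  symm : ∀ {e f}, E.conf e f → E.conf f e
  hered : ∀ {e f g}, E.conf e f → E.le f g → E.conf e g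
  sbj : ∀ e ∈ E.ev, (E.lbl e).sbj ∈ Γ
  hits : ∀ x ∈ E.MaxC, ∀ A ∈ Γ, ∃ e ∈ x, (E.lbl e).sbj = A
  minl : ∀ A, (E.proj A).minLbl = hat φ A

/-! ### Structural lemmas for projections and `esSeq` -/

lemma mem_proj_ev {E : ES P M} {A : P} {u : ℕ} :
    u ∈ (E.proj A).ev ↔ u ∈ E.ev ∧ (E.lbl u).sbj = A := Iff.rfl

lemma proj_le_iff {E : ES P M} {A : P} {u v : ℕ} :
    (E.proj A).le u v ↔ E.le u v ∧ (u ∈ E.ev ∧ (E.lbl u).sbj = A) ∧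
      (v ∈ E.ev ∧ (E.lbl v).sbj = A) := Iff.rfl

lemma proj_lbl {E : ES P M} {A : P} : (E.proj A).lbl = E.lbl := rfl

lemma mem_minEv {E : ES P M} {e : ℕ} :
    e ∈ E.minEv ↔ e ∈ E.ev ∧ ∀ f ∈ E.ev, E.le f e → f = e := Iff.rfl

lemma mem_maxEv {E : ES P M} {e : ℕ} :
    e ∈ E.maxEv ↔ e ∈ E.ev ∧ ∀ f ∈ E.ev, E.le e f → f = e := Iff.rfl

variable {E1 E2 : ES P M}

lemma seq_lbl_tagL (e : ℕ) : (esSeq E1 E2).lbl (tagL e) = E1.lbl e := by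
  simp [esSeq, tagL, Nat.unpair_pair]

lemma seq_lbl_tagC (k f : ℕ) : (esSeq E1 E2).lbl (tagC k f) = E2.lbl f := by
  simp [esSeq, tagC, Nat.unpair_pair]

lemma mem_seq_ev {u : ℕ} : u ∈ (esSeq E1 E2).ev ↔
    (∃ e ∈ E1.ev, u = tagL e) ∨
    (∃ x ∈ E1.MaxC, ∃ f ∈ E2.ev, u = tagC (encSet x) f) := by
  simp only [esSeq, Set.mem_union, Set.mem_image, Set.mem_setOf_eq]
  constructor
  · rintro (⟨e, he, rfl⟩ | h)
    · exact Or.inl ⟨e, he, rfl⟩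
    · exact Or.inr h
  · rintro (⟨e, he, rfl⟩ | h)
    · exact Or.inl ⟨e, he, rfl⟩
    · exact Or.inr h

lemma seq_le_iff {u v : ℕ} : (esSeq E1 E2).le u v ↔
    (∃ e ∈ E1.ev, ∃ f ∈ E1.ev, E1.le e f ∧ u = tagL e ∧ v = tagL f) ∨
    (∃ x ∈ E1.MaxC, ∃ e ∈ E2.ev, ∃ f ∈ E2.ev, E2.le e f ∧
       u = tagC (encSet x) e ∧ v = tagC (encSet x) f) ∨
    (∃ x ∈ E1.MaxC, ∃ e ∈ x, ∃ f ∈ E2.ev, (E1.lbl e).sbj = (E2.lbl f).sbj ∧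
       u = tagL e ∧ v = tagC (encSet x) f) := Iff.rfl

lemma seq_conf_iff {u v : ℕ} : (esSeq E1 E2).conf u v ↔
    (∃ e ∈ E1.ev, ∃ f ∈ E1.ev, E1.conf e f ∧ u = tagL e ∧ v = tagL f) ∨
    (∃ x ∈ E1.MaxC, ∃ e ∈ E2.ev, ∃ f ∈ E2.ev, E2.conf e f ∧
       u = tagC (encSet x) e ∧ v = tagC (encSet x) f) ∨
    (∃ x ∈ E1.MaxC, ∃ x' ∈ E1.MaxC, x ≠ x' ∧ ∃ e ∈ E2.ev, ∃ f ∈ E2.ev,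
       u = tagC (encSet x) e ∧ v = tagC (encSet x') f) ∨
    (∃ x ∈ E1.MaxC, ∃ e ∈ E1.ev, (∃ e' ∈ x, E1.conf e e') ∧ ∃ f ∈ E2.ev,
       ((u = tagL e ∧ v = tagC (encSet x) f) ∨
        (u = tagC (encSet x) f ∧ v = tagL e))) := Iff.rfl

/-- Copies over maximal configurations are disambiguated by `encSet` injectivity. -/
lemma maxc_encSet_inj (hfin : E1.ev.Finite) {x x' : Set ℕ}
    (hx : x ∈ E1.MaxC) (hx' : x' ∈ E1.MaxC) (h : encSet x = encSet x') : x = x' :=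
  encSet_inj (hfin.subset (E1.maxc_subset hx)) (hfin.subset (E1.maxc_subset hx')) h

/-! ### The four transfer lemmas for `esSeq` projections -/

lemma seq_minLbl_left {A : P}
    (hhit : ∀ x ∈ E1.MaxC, ∃ e ∈ x, (E1.lbl e).sbj = A) :
    ((esSeq E1 E2).proj A).minLbl = (E1.proj A).minLbl := by
  ext l
  simp only [ES.minLbl, Set.mem_image]
  constructor
  · rintro ⟨u, ⟨⟨huev, husbj⟩, humin⟩, rfl⟩
    rcases mem_seq_ev.1 huev with ⟨e, he, rfl⟩ | ⟨x, hx, f, hf, rfl⟩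
    · refine ⟨e, ⟨⟨he, by rwa [seq_lbl_tagL] at husbj⟩, ?_⟩, (seq_lbl_tagL e).symm⟩
      · intro g hg hle
        have hgv : tagL g ∈ ((esSeq E1 E2).proj A).ev := by
          exact ⟨mem_seq_ev.2 (Or.inl ⟨g, hg.1, rfl⟩), by
            rw [seq_lbl_tagL]; exact hg.2⟩
        have : (esSeq E1 E2).proj A |>.le (tagL g) (tagL e) := by
          refine ⟨seq_le_iff.2 (Or.inl ⟨g, hg.1, e, he, hle.1, rfl, rfl⟩), hgv, huev, husbj⟩
        exact tagL_inj (humin _ hgv this)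
    · exfalso
      obtain ⟨e, hex, hesbj⟩ := hhit x hx
      have heE : e ∈ E1.ev := E1.maxc_subset hx hex
      have hfs : (E2.lbl f).sbj = A := by rwa [seq_lbl_tagC] at husbj
      have h1 : tagL e ∈ ((esSeq E1 E2).proj A).ev :=
        ⟨mem_seq_ev.2 (Or.inl ⟨e, heE, rfl⟩), by rw [seq_lbl_tagL]; exact hesbj⟩
      have hle : ((esSeq E1 E2).proj A).le (tagL e) (tagC (encSet x) f) := by
        refine ⟨seq_le_iff.2 (Or.inr (Or.inr ⟨x, hx, e, hex, f, hf, ?_, rfl, rfl⟩)),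
          h1, huev, husbj⟩
        rw [hesbj, hfs]
      exact tagL_ne_tagC (humin _ h1 hle)
  · rintro ⟨e, ⟨⟨he, hs⟩, hmin⟩, rfl⟩
    have huev : tagL e ∈ ((esSeq E1 E2).proj A).ev :=
      ⟨mem_seq_ev.2 (Or.inl ⟨e, he, rfl⟩), by rw [seq_lbl_tagL]; exact hs⟩
    refine ⟨tagL e, ⟨huev, ?_⟩, seq_lbl_tagL e⟩
    intro v hv hle
    obtain ⟨hle', hv', -⟩ := hle
    rcases seq_le_iff.1 hle' with ⟨e₁, he₁, f₁, hf₁, h₁, rfl, hveq⟩ |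
      ⟨x, hx, e₁, he₁, f₁, hf₁, h₁, rfl, hveq⟩ | ⟨x, hx, e₁, he₁, f₁, hf₁, hsb, rfl, hveq⟩
    · have hfe : f₁ = e := tagL_inj hveq.symm
      have he₁p : e₁ ∈ (E1.proj A).ev := by
        refine ⟨he₁, ?_⟩
        have := hv'.2; rwa [seq_lbl_tagL] at this
      have : e₁ = e := hmin e₁ he₁p ⟨hfe ▸ h₁, he₁p, he, hs⟩
      rw [this]
    · exact absurd hveq tagL_ne_tagC
    · exact absurd hveq tagL_ne_tagC

lemma seq_minLbl_right {A : P}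
    (hign : ∀ e ∈ E1.ev, (E1.lbl e).sbj ≠ A)
    (hne : ∃ x, x ∈ E1.MaxC) :
    ((esSeq E1 E2).proj A).minLbl = (E2.proj A).minLbl := by
  ext l
  simp only [ES.minLbl, Set.mem_image]
  constructor
  · rintro ⟨u, ⟨⟨huev, husbj⟩, humin⟩, rfl⟩
    rcases mem_seq_ev.1 huev with ⟨e, he, rfl⟩ | ⟨x, hx, f, hf, rfl⟩
    · exfalso
      exact hign e he (by rwa [seq_lbl_tagL] at husbj)
    · have hfs : (E2.lbl f).sbj = A := by rwa [seq_lbl_tagC] at husbj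
      refine ⟨f, ⟨⟨hf, hfs⟩, ?_⟩, (seq_lbl_tagC _ f).symm⟩
      intro g hg hle
      have hgv : tagC (encSet x) g ∈ ((esSeq E1 E2).proj A).ev :=
        ⟨mem_seq_ev.2 (Or.inr ⟨x, hx, g, hg.1, rfl⟩), by
          rw [seq_lbl_tagC]; exact hg.2⟩
      have : ((esSeq E1 E2).proj A).le (tagC (encSet x) g) (tagC (encSet x) f) :=
        ⟨seq_le_iff.2 (Or.inr (Or.inl ⟨x, hx, g, hg.1, f, hf, hle.1, rfl, rfl⟩)),
          hgv, huev, husbj⟩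
      exact (tagC_eq_tagC.1 (humin _ hgv this)).2
  · rintro ⟨f, ⟨⟨hf, hs⟩, hmin⟩, rfl⟩
    obtain ⟨x, hx⟩ := hne
    have huev : tagC (encSet x) f ∈ ((esSeq E1 E2).proj A).ev :=
      ⟨mem_seq_ev.2 (Or.inr ⟨x, hx, f, hf, rfl⟩), by
        rw [seq_lbl_tagC]; exact hs⟩
    refine ⟨tagC (encSet x) f, ⟨huev, ?_⟩, seq_lbl_tagC _ f⟩
    intro v hv hle
    obtain ⟨hle', hv', -⟩ := hle
    rcases seq_le_iff.1 hle' with ⟨e₁, he₁, f₁, hf₁, h₁, rfl, hveq⟩ |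
      ⟨x', hx', e₁, he₁, f₁, hf₁, h₁, rfl, hveq⟩ | ⟨x', hx', e₁, he₁, f₁, hf₁, hsb, rfl, hveq⟩
    · exact absurd hveq (fun h => tagL_ne_tagC h.symm)
    · obtain ⟨hk, hffeq⟩ := tagC_eq_tagC.1 hveq
      have he₁p : e₁ ∈ (E2.proj A).ev := by
        refine ⟨he₁, ?_⟩
        have := hv'.2; rwa [seq_lbl_tagC] at this
      have : e₁ = f := hmin e₁ he₁p ⟨hffeq ▸ h₁, he₁p, hf, hs⟩
      rw [this, hk]
    · exact absurd (by
          have := hv'.2; rwa [seq_lbl_tagL] at this)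
        (hign e₁ (E1.maxc_subset hx' he₁))

lemma seq_maxLbl_left {A : P}
    (h2 : ∀ f ∈ E2.ev, (E2.lbl f).sbj ≠ A) :
    ((esSeq E1 E2).proj A).maxLbl = (E1.proj A).maxLbl := by
  ext l
  simp only [ES.maxLbl, Set.mem_image]
  constructor
  · rintro ⟨u, ⟨⟨huev, husbj⟩, humax⟩, rfl⟩
    rcases mem_seq_ev.1 huev with ⟨e, he, rfl⟩ | ⟨x, hx, f, hf, rfl⟩
    · refine ⟨e, ⟨⟨he, by rwa [seq_lbl_tagL] at husbj⟩, ?_⟩, (seq_lbl_tagL e).symm⟩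
      · intro g hg hle
        have hgv : tagL g ∈ ((esSeq E1 E2).proj A).ev :=
          ⟨mem_seq_ev.2 (Or.inl ⟨g, hg.1, rfl⟩), by
            rw [seq_lbl_tagL]; exact hg.2⟩
        have : ((esSeq E1 E2).proj A).le (tagL e) (tagL g) :=
          ⟨seq_le_iff.2 (Or.inl ⟨e, he, g, hg.1, hle.1, rfl, rfl⟩), ⟨huev, husbj⟩, hgv⟩
        exact tagL_inj (humax _ hgv this)
    · exact absurd (by rwa [seq_lbl_tagC] at husbj) (h2 f hf)
  · rintro ⟨e, ⟨⟨he, hs⟩, hmax⟩, rfl⟩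
    have huev : tagL e ∈ ((esSeq E1 E2).proj A).ev :=
      ⟨mem_seq_ev.2 (Or.inl ⟨e, he, rfl⟩), by rw [seq_lbl_tagL]; exact hs⟩
    refine ⟨tagL e, ⟨huev, ?_⟩, seq_lbl_tagL e⟩
    intro v hv hle
    obtain ⟨hle', -, hv'⟩ := hle
    rcases seq_le_iff.1 hle' with ⟨e₁, he₁, f₁, hf₁, h₁, hueq, rfl⟩ |
      ⟨x, hx, e₁, he₁, f₁, hf₁, h₁, hueq, rfl⟩ | ⟨x, hx, e₁, he₁, f₁, hf₁, hsb, hueq, rfl⟩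
    · have hee : e₁ = e := tagL_inj hueq.symm
      have hf₁p : f₁ ∈ (E1.proj A).ev := by
        refine ⟨hf₁, ?_⟩
        have := hv'.2; rwa [seq_lbl_tagL] at this
      have : f₁ = e := hmax f₁ hf₁p ⟨hee ▸ h₁, ⟨he, hs⟩, hf₁p⟩
      rw [this]
    · exact absurd hueq tagL_ne_tagC
    · exact absurd (by
          have := hv'.2; rwa [seq_lbl_tagC] at this)
        (h2 f₁ hf₁)

lemma seq_maxLbl_right {A : P}
    (hf : ∃ f ∈ E2.ev, (E2.lbl f).sbj = A)
    (hmem : ∀ e ∈ E1.ev, ∃ x ∈ E1.MaxC, e ∈ x)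
    (hne : ∃ x, x ∈ E1.MaxC) :
    ((esSeq E1 E2).proj A).maxLbl = (E2.proj A).maxLbl := by
  ext l
  simp only [ES.maxLbl, Set.mem_image]
  constructor
  · rintro ⟨u, ⟨⟨huev, husbj⟩, humax⟩, rfl⟩
    rcases mem_seq_ev.1 huev with ⟨e, he, rfl⟩ | ⟨x, hx, f, hf', rfl⟩
    · exfalso
      obtain ⟨x, hx, hex⟩ := hmem e he
      obtain ⟨f0, hf0, hf0s⟩ := hf
      have hes : (E1.lbl e).sbj = A := by rwa [seq_lbl_tagL] at husbj
      have hgv : tagC (encSet x) f0 ∈ ((esSeq E1 E2).proj A).ev :=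
        ⟨mem_seq_ev.2 (Or.inr ⟨x, hx, f0, hf0, rfl⟩), by
          rw [seq_lbl_tagC]; exact hf0s⟩
      have hle : ((esSeq E1 E2).proj A).le (tagL e) (tagC (encSet x) f0) :=
        ⟨seq_le_iff.2 (Or.inr (Or.inr ⟨x, hx, e, hex, f0, hf0, by rw [hes, hf0s], rfl, rfl⟩)),
          ⟨huev, husbj⟩, hgv⟩
      exact tagL_ne_tagC (humax _ hgv hle).symm
    · have hfs : (E2.lbl f).sbj = A := by rwa [seq_lbl_tagC] at husbj
      refine ⟨f, ⟨⟨hf', hfs⟩, ?_⟩, (seq_lbl_tagC _ f).symm⟩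
      intro g hg hle
      have hgv : tagC (encSet x) g ∈ ((esSeq E1 E2).proj A).ev :=
        ⟨mem_seq_ev.2 (Or.inr ⟨x, hx, g, hg.1, rfl⟩), by
          rw [seq_lbl_tagC]; exact hg.2⟩
      have : ((esSeq E1 E2).proj A).le (tagC (encSet x) f) (tagC (encSet x) g) :=
        ⟨seq_le_iff.2 (Or.inr (Or.inl ⟨x, hx, f, hf', g, hg.1, hle.1, rfl, rfl⟩)),
          ⟨huev, husbj⟩, hgv⟩
      exact (tagC_eq_tagC.1 (humax _ hgv this)).2
  · rintro ⟨f, ⟨⟨hfe, hs⟩, hmax⟩, rfl⟩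
    obtain ⟨x, hx⟩ := hne
    have huev : tagC (encSet x) f ∈ ((esSeq E1 E2).proj A).ev :=
      ⟨mem_seq_ev.2 (Or.inr ⟨x, hx, f, hfe, rfl⟩), by
        rw [seq_lbl_tagC]; exact hs⟩
    refine ⟨tagC (encSet x) f, ⟨huev, ?_⟩, seq_lbl_tagC _ f⟩
    intro v hv hle
    obtain ⟨hle', -, hv'⟩ := hle
    rcases seq_le_iff.1 hle' with ⟨e₁, he₁, f₁, hf₁, h₁, hueq, rfl⟩ |
      ⟨x', hx', e₁, he₁, f₁, hf₁, h₁, hueq, rfl⟩ | ⟨x', hx', e₁, he₁, f₁, hf₁, hsb, hueq, rfl⟩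
    · exact absurd hueq.symm tagL_ne_tagC
    · obtain ⟨hk, heeq⟩ := tagC_eq_tagC.1 hueq
      have hf₁p : f₁ ∈ (E2.proj A).ev := by
        refine ⟨hf₁, ?_⟩
        have := hv'.2; rwa [seq_lbl_tagC] at this
      have : f₁ = f := hmax f₁ hf₁p ⟨heeq ▸ h₁, ⟨hfe, hs⟩, hf₁p⟩
      rw [this, hk]
    · exact absurd hueq.symm tagL_ne_tagC

/-! ### Sanity preservation for `esSeq` -/

lemma maxc_finite (hf : E1.ev.Finite) : E1.MaxC.Finite :=
  hf.finite_subsets.subset (fun _ hx => E1.maxc_subset hx)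

lemma seq_fin (hf1 : E1.ev.Finite) (hf2 : E2.ev.Finite) : (esSeq E1 E2).ev.Finite := by
  apply Set.Finite.union
  · exact hf1.image _
  · have : {u | ∃ x ∈ E1.MaxC, ∃ f ∈ E2.ev, u = tagC (encSet x) f}
        = ⋃ x ∈ E1.MaxC, (fun f => tagC (encSet x) f) '' E2.ev := by
      ext u
      simp only [Set.mem_setOf_eq, Set.mem_iUnion, Set.mem_image]
      constructor
      · rintro ⟨x, hx, f, hf, rfl⟩; exact ⟨x, hx, f, hf, rfl⟩
      · rintro ⟨x, hx, f, hf, rfl⟩; exact ⟨x, hx, f, hf, rfl⟩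
    rw [this]
    exact (maxc_finite hf1).biUnion (fun x _ => hf2.image _)

lemma seq_irrefl (hf1 : E1.ev.Finite) (i1 : ∀ e, ¬ E1.conf e e)
    (i2 : ∀ e, ¬ E2.conf e e) (u : ℕ) : ¬ (esSeq E1 E2).conf u u := by
  intro h
  rcases seq_conf_iff.1 h with ⟨e, he, f, hfe, hcc, rfl, heq⟩ |
    ⟨x, hx, e, he, f, hfe, hcc, rfl, heq⟩ |
    ⟨x, hx, x', hx', hne, e, he, f, hfe, rfl, heq⟩ |
    ⟨x, hx, e, he, ⟨e', he', hcc⟩, f, hfe, (⟨h4a, h4b⟩ | ⟨h4a, h4b⟩)⟩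
  · cases tagL_inj heq; exact i1 _ hcc
  · obtain ⟨-, rfl⟩ := tagC_eq_tagC.1 heq; exact i2 _ hcc
  · obtain ⟨hk, -⟩ := tagC_eq_tagC.1 heq
    exact hne (maxc_encSet_inj hf1 hx hx' hk)
  · exact tagL_ne_tagC (h4a.symm.trans h4b)
  · exact tagL_ne_tagC (h4b.symm.trans h4a)

lemma seq_symm (s1 : ∀ {e f}, E1.conf e f → E1.conf f e)
    (s2 : ∀ {e f}, E2.conf e f → E2.conf f e) {u v : ℕ}
    (h : (esSeq E1 E2).conf u v) : (esSeq E1 E2).conf v u := by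
  rcases seq_conf_iff.1 h with ⟨e, he, f, hfe, hcc, hu, hv⟩ |
    ⟨x, hx, e, he, f, hfe, hcc, hu, hv⟩ |
    ⟨x, hx, x', hx', hne, e, he, f, hfe, hu, hv⟩ |
    ⟨x, hx, e, he, hcc', f, hfe, (⟨h4a, h4b⟩ | ⟨h4a, h4b⟩)⟩
  · exact seq_conf_iff.2 (Or.inl ⟨f, hfe, e, he, s1 hcc, hv, hu⟩)
  · exact seq_conf_iff.2 (Or.inr (Or.inl ⟨x, hx, f, hfe, e, he, s2 hcc, hv, hu⟩))
  · exact seq_conf_iff.2 (Or.inr (Or.inr (Or.inl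
      ⟨x', hx', x, hx, hne.symm, f, hfe, e, he, hv, hu⟩)))
  · exact seq_conf_iff.2 (Or.inr (Or.inr (Or.inr
      ⟨x, hx, e, he, hcc', f, hfe, Or.inr ⟨h4b, h4a⟩⟩)))
  · exact seq_conf_iff.2 (Or.inr (Or.inr (Or.inr
      ⟨x, hx, e, he, hcc', f, hfe, Or.inl ⟨h4b, h4a⟩⟩)))

lemma seq_hered (hf1 : E1.ev.Finite)
    (s1 : ∀ {e f}, E1.conf e f → E1.conf f e)
    (hh1 : ∀ {e f g}, E1.conf e f → E1.le f g → E1.conf e g)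
    (hh2 : ∀ {e f g}, E2.conf e f → E2.le f g → E2.conf e g)
    {u v w : ℕ} (hc : (esSeq E1 E2).conf u v) (hl : (esSeq E1 E2).le v w) :
    (esSeq E1 E2).conf u w := by
  rcases seq_conf_iff.1 hc with ⟨e, he, f, hfe, hcc, hu, hv⟩ |
    ⟨x, hx, e, he, f, hfe, hcc, hu, hv⟩ |
    ⟨x, hx, x', hx', hne, e, he, f, hfe, hu, hv⟩ |
    ⟨x, hx, e, he, ⟨e', he', hcc⟩, f, hfe, (⟨hu, hv⟩ | ⟨hu, hv⟩)⟩
  · -- conflict inside E1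
    rcases seq_le_iff.1 hl with ⟨e₁, he₁, f₁, hf₁, hle, hv₁, hw⟩ |
      ⟨x₁, hx₁, e₁, he₁, f₁, hf₁, hle, hv₁, hw⟩ | ⟨x₁, hx₁, e₁, he₁, f₁, hf₁, hsb, hv₁, hw⟩
    · have : f = e₁ := tagL_inj (hv.symm.trans hv₁)
      exact seq_conf_iff.2 (Or.inl ⟨e, he, f₁, hf₁, hh1 hcc (this ▸ hle), hu, hw⟩)
    · exact absurd (hv.symm.trans hv₁) tagL_ne_tagC
    · have : f = e₁ := tagL_inj (hv.symm.trans hv₁)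
      exact seq_conf_iff.2 (Or.inr (Or.inr (Or.inr
        ⟨x₁, hx₁, e, he, ⟨e₁, he₁, this ▸ hcc⟩, f₁, hf₁, Or.inl ⟨hu, hw⟩⟩)))
  · -- conflict inside a copy
    rcases seq_le_iff.1 hl with ⟨e₁, he₁, f₁, hf₁, hle, hv₁, hw⟩ |
      ⟨x₁, hx₁, e₁, he₁, f₁, hf₁, hle, hv₁, hw⟩ | ⟨x₁, hx₁, e₁, he₁, f₁, hf₁, hsb, hv₁, hw⟩
    · exact absurd (hv₁.symm.trans hv) tagL_ne_tagC
    · obtain ⟨hk, hef⟩ := tagC_eq_tagC.1 (hv.symm.trans hv₁)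
      refine seq_conf_iff.2 (Or.inr (Or.inl ⟨x, hx, e, he, f₁, hf₁,
        hh2 hcc (hef ▸ hle), hu, ?_⟩))
      rw [hw, hk]
    · exact absurd (hv₁.symm.trans hv) tagL_ne_tagC
  · -- conflict between different copies
    rcases seq_le_iff.1 hl with ⟨e₁, he₁, f₁, hf₁, hle, hv₁, hw⟩ |
      ⟨x₁, hx₁, e₁, he₁, f₁, hf₁, hle, hv₁, hw⟩ | ⟨x₁, hx₁, e₁, he₁, f₁, hf₁, hsb, hv₁, hw⟩
    · exact absurd (hv₁.symm.trans hv) tagL_ne_tagC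
    · obtain ⟨hk, hef⟩ := tagC_eq_tagC.1 (hv.symm.trans hv₁)
      refine seq_conf_iff.2 (Or.inr (Or.inr (Or.inl
        ⟨x, hx, x', hx', hne, e, he, f₁, hf₁, hu, ?_⟩)))
      rw [hw, hk]
    · exact absurd (hv₁.symm.trans hv) tagL_ne_tagC
  · -- clause 4, orientation (tagL, copy)
    rcases seq_le_iff.1 hl with ⟨e₁, he₁, f₁, hf₁, hle, hv₁, hw⟩ |
      ⟨x₁, hx₁, e₁, he₁, f₁, hf₁, hle, hv₁, hw⟩ | ⟨x₁, hx₁, e₁, he₁, f₁, hf₁, hsb, hv₁, hw⟩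
    · exact absurd (hv₁.symm.trans hv) tagL_ne_tagC
    · obtain ⟨hk, hef⟩ := tagC_eq_tagC.1 (hv.symm.trans hv₁)
      refine seq_conf_iff.2 (Or.inr (Or.inr (Or.inr
        ⟨x, hx, e, he, ⟨e', he', hcc⟩, f₁, hf₁, Or.inl ⟨hu, ?_⟩⟩)))
      rw [hw, hk]
    · exact absurd (hv₁.symm.trans hv) tagL_ne_tagC
  · -- clause 4, orientation (copy, tagL)
    rcases seq_le_iff.1 hl with ⟨e₁, he₁, f₁, hf₁, hle, hv₁, hw⟩ |
      ⟨x₁, hx₁, e₁, he₁, f₁, hf₁, hle, hv₁, hw⟩ | ⟨x₁, hx₁, e₁, he₁, f₁, hf₁, hsb, hv₁, hw⟩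
    · have heq : e = e₁ := tagL_inj (hv.symm.trans hv₁)
      have : E1.conf f₁ e' := s1 (hh1 (s1 hcc) (heq ▸ hle))
      exact seq_conf_iff.2 (Or.inr (Or.inr (Or.inr
        ⟨x, hx, f₁, hf₁, ⟨e', he', this⟩, f, hfe, Or.inr ⟨hu, hw⟩⟩)))
    · exact absurd (hv.symm.trans hv₁) tagL_ne_tagC
    · have heq : e = e₁ := tagL_inj (hv.symm.trans hv₁)
      by_cases hxx : x = x₁
      · exfalso
        exact hx.1.2.2 e (hxx ▸ heq ▸ he₁) e' he' hcc
      · exact seq_conf_iff.2 (Or.inr (Or.inr (Or.inl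
          ⟨x, hx, x₁, hx₁, hxx, f, hfe, f₁, hf₁, hu, hw⟩)))

lemma seq_hits {Γ1 Γ2 : Set P} (hf1 : E1.ev.Finite) (hf2 : E2.ev.Finite)
    (s1 : ∀ {e f}, E1.conf e f → E1.conf f e)
    (s2 : ∀ {e f}, E2.conf e f → E2.conf f e)
    (hits1 : ∀ x ∈ E1.MaxC, ∀ A ∈ Γ1, ∃ e ∈ x, (E1.lbl e).sbj = A)
    (hits2 : ∀ y ∈ E2.MaxC, ∀ A ∈ Γ2, ∃ f ∈ y, (E2.lbl f).sbj = A) :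
    ∀ z ∈ (esSeq E1 E2).MaxC, ∀ A ∈ Γ1 ∪ Γ2,
      ∃ u ∈ z, ((esSeq E1 E2).lbl u).sbj = A := by
  intro z hz A hA
  obtain ⟨⟨hzev, hzdc, hzcf⟩, hzmax⟩ := hz
  by_cases hcopy : ∃ x ∈ E1.MaxC, ∃ f ∈ E2.ev, tagC (encSet x) f ∈ z
  · -- z contains a copy event, over the base x₀
    obtain ⟨x₀, hx₀, f₀, hf₀, hin₀⟩ := hcopy
    have huniq : ∀ x ∈ E1.MaxC, ∀ f ∈ E2.ev, tagC (encSet x) f ∈ z → x = x₀ := by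
      intro x hx f hf hin
      by_contra hne
      exact hzcf _ hin _ hin₀ (seq_conf_iff.2 (Or.inr (Or.inr (Or.inl
        ⟨x, hx, x₀, hx₀, hne, f, hf, f₀, hf₀, rfl, rfl⟩))))
    have hmemL : ∀ e, tagL e ∈ z → e ∈ E1.ev := by
      intro e hin
      rcases mem_seq_ev.1 (hzev hin) with ⟨e₂, he₂, heq⟩ | ⟨x, hx, f, hf, heq⟩
      · cases tagL_inj heq; exact he₂
      · exact absurd heq tagL_ne_tagC
    have hnoconf : ∀ e, tagL e ∈ z → ∀ e' ∈ x₀, ¬ E1.conf e e' := by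
      intro e hin e' he' hc
      exact hzcf _ hin _ hin₀ (seq_conf_iff.2 (Or.inr (Or.inr (Or.inr
        ⟨x₀, hx₀, e, hmemL e hin, ⟨e', he', hc⟩, f₀, hf₀, Or.inl ⟨rfl, rfl⟩⟩))))
    have key : ∀ p ∈ z ∪ tagL '' x₀, ∀ e ∈ x₀, ¬ (esSeq E1 E2).conf p (tagL e) := by
      intro p hp e he hc
      rcases seq_conf_iff.1 hc with ⟨e₁, he₁, f₁, hf₁, hcc, hp₁, heq⟩ |
        ⟨x₁, hx₁, e₁, he₁, f₁, hf₁, hcc, hp₁, heq⟩ |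
        ⟨x₁, hx₁, x₁', hx₁', hne, e₁, he₁, f₁, hf₁, hp₁, heq⟩ |
        ⟨x₁, hx₁, e₁, he₁, ⟨e', he', hcc⟩, f₁, hf₁, (⟨hp₁, heq⟩ | ⟨hp₁, heq⟩)⟩
      · have hf₁e : f₁ = e := tagL_inj heq.symm
        rcases hp with hp | ⟨e₂, he₂, hpe⟩
        · exact hnoconf e₁ (hp₁ ▸ hp) e he (hf₁e ▸ hcc)
        · have he₁₂ : e₁ = e₂ := tagL_inj (hp₁.symm.trans hpe.symm)
          exact hx₀.1.2.2 e₁ (he₁₂ ▸ he₂) e he (hf₁e ▸ hcc)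
      · exact tagL_ne_tagC heq
      · exact tagL_ne_tagC heq
      · exact tagL_ne_tagC heq
      · -- p a copy conflicting with x₀ member: impossible since bases coincide
        have hp₂ : p ∈ z := by
          rcases hp with hp | ⟨e₂, he₂, hpe⟩
          · exact hp
          · exact absurd (hpe.trans hp₁) tagL_ne_tagC
        have hx₁₀ : x₁ = x₀ := huniq x₁ hx₁ f₁ hf₁ (hp₁ ▸ hp₂)
        have hee : e₁ = e := tagL_inj heq.symm
        exact hx₀.1.2.2 e' (hx₁₀ ▸ he') e he (s1 (hee ▸ hcc))
    have hLx₀ : ∀ e ∈ x₀, tagL e ∈ z := by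
      have hcfg : (esSeq E1 E2).Config (z ∪ tagL '' x₀) := by
        refine ⟨?_, ?_, ?_⟩
        · rintro u (hu | ⟨e, he, rfl⟩)
          · exact hzev hu
          · exact mem_seq_ev.2 (Or.inl ⟨e, E1.maxc_subset hx₀ he, rfl⟩)
        · rintro u (hu | ⟨e, he, rfl⟩) w hw hle
          · exact Or.inl (hzdc u hu w hw hle)
          · rcases seq_le_iff.1 hle with ⟨e₁, he₁, f₁, hf₁, hle₁, hw₁, heq⟩ |
              ⟨x₁, hx₁, e₁, he₁, f₁, hf₁, hle₁, hw₁, heq⟩ |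
              ⟨x₁, hx₁, e₁, he₁, f₁, hf₁, hsb, hw₁, heq⟩
            · have hf₁e : f₁ = e := tagL_inj heq.symm
              exact Or.inr ⟨e₁, hx₀.1.2.1 e he e₁ he₁ (hf₁e ▸ hle₁), hw₁.symm⟩
            · exact absurd heq tagL_ne_tagC
            · exact absurd heq tagL_ne_tagC
        · intro p hp q hq hc
          rcases hq with hq | ⟨e, he, rfl⟩
          · rcases hp with hp | ⟨e, he, rfl⟩
            · exact hzcf p hp q hq hc
            · exact key q (Or.inl hq) e he (seq_symm s1 s2 hc)
          · exact key p hp e he hc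
      have hzeq := hzmax _ hcfg Set.subset_union_left
      intro e he
      exact hzeq ▸ Or.inr ⟨e, he, rfl⟩
    rcases hA with hA1 | hA2
    · obtain ⟨e, he, hs⟩ := hits1 x₀ hx₀ A hA1
      exact ⟨tagL e, hLx₀ e he, by rw [seq_lbl_tagL]; exact hs⟩
    · -- build the maximal configuration of E2 copied into z
      set y : Set ℕ := {f | f ∈ E2.ev ∧ tagC (encSet x₀) f ∈ z} with hydef
      have hycfg : E2.Config y := by
        refine ⟨fun f hf => hf.1, ?_, ?_⟩
        · intro f hf g hg hle
          refine ⟨hg, hzdc _ hf.2 _ (mem_seq_ev.2 (Or.inr ⟨x₀, hx₀, g, hg, rfl⟩)) ?_⟩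
          exact seq_le_iff.2 (Or.inr (Or.inl ⟨x₀, hx₀, g, hg, f, hf.1, hle, rfl, rfl⟩))
        · intro f hf g hg hc
          exact hzcf _ hf.2 _ hg.2 (seq_conf_iff.2 (Or.inr (Or.inl
            ⟨x₀, hx₀, f, hf.1, g, hg.1, hc, rfl, rfl⟩)))
      have hymax : y ∈ E2.MaxC := by
        refine ⟨hycfg, ?_⟩
        intro y' hy' hsub
        have key2 : ∀ p ∈ z ∪ (fun f => tagC (encSet x₀) f) '' y',
            ∀ f ∈ y', ¬ (esSeq E1 E2).conf p (tagC (encSet x₀) f) := by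
          intro p hp f hf hc
          have hbase : ∀ q e₁, q = tagC (encSet x₀) e₁ → e₁ ∈ E2.ev →
              q ∈ z ∪ (fun f => tagC (encSet x₀) f) '' y' → e₁ ∈ y' := by
            intro q e₁ hq he₁ hqm
            rcases hqm with hqm | ⟨g, hg, hge⟩
            · exact hsub ⟨he₁, hq ▸ hqm⟩
            · cases (tagC_eq_tagC.1 (hge.trans hq)).2; exact hg
          rcases seq_conf_iff.1 hc with ⟨e₁, he₁, f₁, hf₁, hcc, hp₁, heq⟩ |
            ⟨x₁, hx₁, e₁, he₁, f₁, hf₁, hcc, hp₁, heq⟩ |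
            ⟨x₁, hx₁, x₁', hx₁', hne, e₁, he₁, f₁, hf₁, hp₁, heq⟩ |
            ⟨x₁, hx₁, e₁, he₁, ⟨e', he', hcc⟩, f₁, hf₁, (⟨hp₁, heq⟩ | ⟨hp₁, heq⟩)⟩
          · exact tagL_ne_tagC heq.symm
          · -- conflict within the copy: contradicts y' conflict-freeness
            obtain ⟨hk, hff⟩ := tagC_eq_tagC.1 heq.symm
            have hx₁₀ : x₁ = x₀ := maxc_encSet_inj hf1 hx₁ hx₀ hk
            have he₁y : e₁ ∈ y' := hbase p e₁ (by rw [hp₁, hx₁₀]) he₁ hp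
            exact hy'.2.2 e₁ he₁y f (hff ▸ hf) (hff ▸ hcc)
          · obtain ⟨hk, -⟩ := tagC_eq_tagC.1 heq.symm
            have hx₁'₀ : x₁' = x₀ := maxc_encSet_inj hf1 hx₁' hx₀ hk
            have hx₁₀ : x₁ = x₀ := by
              rcases hp with hp | ⟨g, hg, hge⟩
              · exact huniq x₁ hx₁ e₁ he₁ (hp₁ ▸ hp)
              · exact maxc_encSet_inj hf1 hx₁ hx₀
                  (tagC_eq_tagC.1 (hge.trans hp₁)).1.symm
            exact hne (hx₁₀.trans hx₁'₀.symm)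
          · -- a tagL event of z conflicting with some x₀ member
            obtain ⟨hk, -⟩ := tagC_eq_tagC.1 heq.symm
            have hx₁₀ : x₁ = x₀ := maxc_encSet_inj hf1 hx₁ hx₀ hk
            have hpz : p ∈ z := by
              rcases hp with hp | ⟨g, hg, hge⟩
              · exact hp
              · exact absurd (hge.trans hp₁).symm tagL_ne_tagC
            exact hnoconf e₁ (hp₁ ▸ hpz) e' (hx₁₀ ▸ he') hcc
          · exact tagL_ne_tagC heq.symm
        have hcfg' : (esSeq E1 E2).Config
            (z ∪ (fun f => tagC (encSet x₀) f) '' y') := by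
          refine ⟨?_, ?_, ?_⟩
          · rintro u (hu | ⟨f, hf, rfl⟩)
            · exact hzev hu
            · exact mem_seq_ev.2 (Or.inr ⟨x₀, hx₀, f, hy'.1 hf, rfl⟩)
          · rintro u (hu | ⟨f, hf, rfl⟩) w hw hle
            · exact Or.inl (hzdc u hu w hw hle)
            · rcases seq_le_iff.1 hle with ⟨e₁, he₁, f₁, hf₁, hle₁, hw₁, heq⟩ |
                ⟨x₁, hx₁, e₁, he₁, f₁, hf₁, hle₁, hw₁, heq⟩ |
                ⟨x₁, hx₁, e₁, he₁, f₁, hf₁, hsb, hw₁, heq⟩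
              · exact absurd heq.symm tagL_ne_tagC
              · obtain ⟨hk, hff⟩ := tagC_eq_tagC.1 heq.symm
                refine Or.inr ⟨e₁, hy'.2.1 f hf e₁ he₁ (hff ▸ hle₁), ?_⟩
                rw [hw₁, hk]
              · obtain ⟨hk, -⟩ := tagC_eq_tagC.1 heq.symm
                have : x₁ = x₀ := maxc_encSet_inj hf1 hx₁ hx₀ hk
                exact Or.inl (hw₁ ▸ hLx₀ e₁ (this ▸ he₁))
          · intro p hp q hq hc
            rcases hq with hq | ⟨f, hf, rfl⟩
            · rcases hp with hp | ⟨f, hf, rfl⟩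
              · exact hzcf p hp q hq hc
              · exact key2 q (Or.inl hq) f hf (seq_symm s1 s2 hc)
            · exact key2 p hp f hf hc
        have hzeq := hzmax _ hcfg' Set.subset_union_left
        refine Set.Subset.antisymm ?_ hsub
        intro f hf
        exact ⟨hy'.1 hf, hzeq ▸ Or.inr ⟨f, hf, rfl⟩⟩
      obtain ⟨f, hfy, hfs⟩ := hits2 y hymax A hA2
      exact ⟨tagC (encSet x₀) f, hfy.2, by rw [seq_lbl_tagC]; exact hfs⟩
  · -- z contains no copy events
    have hallL : ∀ u ∈ z, ∃ e ∈ E1.ev, u = tagL e := by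
      intro u hu
      rcases mem_seq_ev.1 (hzev hu) with h | ⟨x, hx, f, hf, rfl⟩
      · exact h
      · exact absurd ⟨x, hx, f, hf, hu⟩ hcopy
    have hxcfg : E1.Config {e | e ∈ E1.ev ∧ tagL e ∈ z} := by
      refine ⟨fun e he => he.1, ?_, ?_⟩
      · intro e he g hg hle
        refine ⟨hg, hzdc _ he.2 _ (mem_seq_ev.2 (Or.inl ⟨g, hg, rfl⟩)) ?_⟩
        exact seq_le_iff.2 (Or.inl ⟨g, hg, e, he.1, hle, rfl, rfl⟩)
      · intro e he g hg hc
        exact hzcf _ he.2 _ hg.2 (seq_conf_iff.2 (Or.inl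
          ⟨e, he.1, g, hg.1, hc, rfl, rfl⟩))
    obtain ⟨xb, hxb, hxsub⟩ := E1.exists_maxc hf1 hxcfg
    obtain ⟨yb, hyb⟩ := E2.maxc_nonempty hf2
    have hccfg : (esSeq E1 E2).Config
        (tagL '' xb ∪ (fun f => tagC (encSet xb) f) '' yb) := by
      refine ⟨?_, ?_, ?_⟩
      · rintro u (⟨e, he, rfl⟩ | ⟨f, hf, rfl⟩)
        · exact mem_seq_ev.2 (Or.inl ⟨e, E1.maxc_subset hxb he, rfl⟩)
        · exact mem_seq_ev.2 (Or.inr ⟨xb, hxb, f, E2.maxc_subset hyb hf, rfl⟩)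
      · rintro u (⟨e, he, rfl⟩ | ⟨f, hf, rfl⟩) w hw hle
        · rcases seq_le_iff.1 hle with ⟨e₁, he₁, f₁, hf₁, hle₁, hw₁, heq⟩ |
            ⟨x₁, hx₁, e₁, he₁, f₁, hf₁, hle₁, hw₁, heq⟩ |
            ⟨x₁, hx₁, e₁, he₁, f₁, hf₁, hsb, hw₁, heq⟩
          · have hf₁e : f₁ = e := tagL_inj heq.symm
            exact Or.inl ⟨e₁, hxb.1.2.1 e he e₁ he₁ (hf₁e ▸ hle₁), hw₁.symm⟩
          · exact absurd heq tagL_ne_tagC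
          · exact absurd heq tagL_ne_tagC
        · rcases seq_le_iff.1 hle with ⟨e₁, he₁, f₁, hf₁, hle₁, hw₁, heq⟩ |
            ⟨x₁, hx₁, e₁, he₁, f₁, hf₁, hle₁, hw₁, heq⟩ |
            ⟨x₁, hx₁, e₁, he₁, f₁, hf₁, hsb, hw₁, heq⟩
          · exact absurd heq.symm tagL_ne_tagC
          · obtain ⟨hk, hff⟩ := tagC_eq_tagC.1 heq.symm
            have : x₁ = xb := maxc_encSet_inj hf1 hx₁ hxb hk
            refine Or.inr ⟨e₁, hyb.1.2.1 f hf e₁ he₁ (hff ▸ hle₁), ?_⟩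
            rw [hw₁, hk]
          · obtain ⟨hk, -⟩ := tagC_eq_tagC.1 heq.symm
            have : x₁ = xb := maxc_encSet_inj hf1 hx₁ hxb hk
            exact Or.inl ⟨e₁, this ▸ he₁, hw₁.symm⟩
      · intro p hp q hq hc
        have hdecL : ∀ r e₁, r ∈ tagL '' xb ∪ (fun f => tagC (encSet xb) f) '' yb →
            r = tagL e₁ → e₁ ∈ xb := by
          intro r e₁ hr hre
          rcases hr with ⟨g, hg, hge⟩ | ⟨g, hg, hge⟩
          · cases tagL_inj (hge.trans hre); exact hg
          · exact absurd (hge.trans hre).symm tagL_ne_tagC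
        have hdecC : ∀ r x₁ f₁, r ∈ tagL '' xb ∪ (fun f => tagC (encSet xb) f) '' yb →
            x₁ ∈ E1.MaxC → r = tagC (encSet x₁) f₁ → x₁ = xb ∧ f₁ ∈ yb := by
          intro r x₁ f₁ hr hx₁ hre
          rcases hr with ⟨g, hg, hge⟩ | ⟨g, hg, hge⟩
          · exact absurd (hge.trans hre) tagL_ne_tagC
          · obtain ⟨hk, hff⟩ := tagC_eq_tagC.1 (hge.trans hre)
            exact ⟨maxc_encSet_inj hf1 hx₁ hxb hk.symm, hff ▸ hg⟩
        rcases seq_conf_iff.1 hc with ⟨e₁, he₁, f₁, hf₁, hcc, hp₁, heq⟩ |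
          ⟨x₁, hx₁, e₁, he₁, f₁, hf₁, hcc, hp₁, heq⟩ |
          ⟨x₁, hx₁, x₁', hx₁', hne, e₁, he₁, f₁, hf₁, hp₁, heq⟩ |
          ⟨x₁, hx₁, e₁, he₁, ⟨e', he', hcc⟩, f₁, hf₁, (⟨hp₁, heq⟩ | ⟨hp₁, heq⟩)⟩
        · exact hxb.1.2.2 e₁ (hdecL p e₁ hp hp₁) f₁ (hdecL q f₁ hq heq) hcc
        · exact hyb.1.2.2 e₁ (hdecC p x₁ e₁ hp hx₁ hp₁).2 f₁ (hdecC q x₁ f₁ hq hx₁ heq).2 hcc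
        · exact hne ((hdecC p x₁ e₁ hp hx₁ hp₁).1.trans (hdecC q x₁' f₁ hq hx₁' heq).1.symm)
        · have h1 := hdecL p e₁ hp hp₁
          have h2 := (hdecC q x₁ f₁ hq hx₁ heq).1
          exact hxb.1.2.2 e₁ h1 e' (h2 ▸ he') hcc
        · have h1 := hdecL q e₁ hq heq
          have h2 := (hdecC p x₁ f₁ hp hx₁ hp₁).1
          exact hxb.1.2.2 e₁ h1 e' (h2 ▸ he') hcc
    have hzc : z ⊆ tagL '' xb ∪ (fun f => tagC (encSet xb) f) '' yb := by
      intro u hu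
      obtain ⟨e, he, rfl⟩ := hallL u hu
      exact Or.inl ⟨e, hxsub ⟨he, hu⟩, rfl⟩
    have hceq := hzmax _ hccfg hzc
    have hybe : yb = ∅ := by
      by_contra hne
      obtain ⟨f, hf⟩ := Set.nonempty_iff_ne_empty.2 hne
      exact hcopy ⟨xb, hxb, f, E2.maxc_subset hyb hf, hceq ▸ Or.inr ⟨f, hf, rfl⟩⟩
    rcases hA with hA1 | hA2
    · obtain ⟨e, he, hs⟩ := hits1 xb hxb A hA1
      exact ⟨tagL e, hceq ▸ Or.inl ⟨e, he, rfl⟩, by rw [seq_lbl_tagL]; exact hs⟩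
    · obtain ⟨f, hf, -⟩ := hits2 yb hyb A hA2
      exact absurd (hybe ▸ hf) (Set.notMem_empty f)

/-! ### Tensor and sum -/

lemma tensor_lbl_tagL (e : ℕ) : (esTensor E1 E2).lbl (tagL e) = E1.lbl e := by
  simp [esTensor, tagL, Nat.unpair_pair]

lemma tensor_lbl_tagR (e : ℕ) : (esTensor E1 E2).lbl (tagR e) = E2.lbl e := by
  simp [esTensor, tagR, Nat.unpair_pair]

lemma mem_tensor_ev {u : ℕ} : u ∈ (esTensor E1 E2).ev ↔
    (∃ e ∈ E1.ev, u = tagL e) ∨ (∃ f ∈ E2.ev, u = tagR f) := by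
  simp only [esTensor, Set.mem_union, Set.mem_image]
  constructor
  · rintro (⟨e, he, rfl⟩ | ⟨f, hf, rfl⟩)
    · exact Or.inl ⟨e, he, rfl⟩
    · exact Or.inr ⟨f, hf, rfl⟩
  · rintro (⟨e, he, rfl⟩ | ⟨f, hf, rfl⟩)
    · exact Or.inl ⟨e, he, rfl⟩
    · exact Or.inr ⟨f, hf, rfl⟩

lemma tensor_le_iff {u v : ℕ} : (esTensor E1 E2).le u v ↔
    (∃ e ∈ E1.ev, ∃ f ∈ E1.ev, E1.le e f ∧ u = tagL e ∧ v = tagL f) ∨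
    (∃ e ∈ E2.ev, ∃ f ∈ E2.ev, E2.le e f ∧ u = tagR e ∧ v = tagR f) := Iff.rfl

lemma tensor_conf_iff {u v : ℕ} : (esTensor E1 E2).conf u v ↔
    (∃ e ∈ E1.ev, ∃ f ∈ E1.ev, E1.conf e f ∧ u = tagL e ∧ v = tagL f) ∨
    (∃ e ∈ E2.ev, ∃ f ∈ E2.ev, E2.conf e f ∧ u = tagR e ∧ v = tagR f) := Iff.rfl

lemma sum_ev : (esSum E1 E2).ev = (esTensor E1 E2).ev := rfl
lemma sum_le : (esSum E1 E2).le = (esTensor E1 E2).le := rfl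
lemma sum_lbl : (esSum E1 E2).lbl = (esTensor E1 E2).lbl := rfl

lemma sum_conf_iff {u v : ℕ} : (esSum E1 E2).conf u v ↔
    (esTensor E1 E2).conf u v ∨
    (∃ e ∈ E1.ev, ∃ f ∈ E2.ev, (u = tagL e ∧ v = tagR f) ∨
      (u = tagR f ∧ v = tagL e)) := Iff.rfl

lemma tensor_fin (hf1 : E1.ev.Finite) (hf2 : E2.ev.Finite) :
    (esTensor E1 E2).ev.Finite := (hf1.image _).union (hf2.image _)

lemma tensor_irrefl (i1 : ∀ e, ¬ E1.conf e e) (i2 : ∀ e, ¬ E2.conf e e) (u : ℕ) :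
    ¬ (esTensor E1 E2).conf u u := by
  rintro (⟨e, he, f, hf, hc, rfl, heq⟩ | ⟨e, he, f, hf, hc, rfl, heq⟩)
  · cases tagL_inj heq; exact i1 _ hc
  · cases tagR_inj heq; exact i2 _ hc

lemma tensor_symm (s1 : ∀ {e f}, E1.conf e f → E1.conf f e)
    (s2 : ∀ {e f}, E2.conf e f → E2.conf f e) {u v : ℕ}
    (h : (esTensor E1 E2).conf u v) : (esTensor E1 E2).conf v u := by
  rcases h with ⟨e, he, f, hf, hc, hu, hv⟩ | ⟨e, he, f, hf, hc, hu, hv⟩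
  · exact Or.inl ⟨f, hf, e, he, s1 hc, hv, hu⟩
  · exact Or.inr ⟨f, hf, e, he, s2 hc, hv, hu⟩

lemma tensor_hered (hh1 : ∀ {e f g}, E1.conf e f → E1.le f g → E1.conf e g)
    (hh2 : ∀ {e f g}, E2.conf e f → E2.le f g → E2.conf e g) {u v w : ℕ}
    (hc : (esTensor E1 E2).conf u v) (hl : (esTensor E1 E2).le v w) :
    (esTensor E1 E2).conf u w := by
  rcases hc with ⟨e, he, f, hf, hcc, hu, hv⟩ | ⟨e, he, f, hf, hcc, hu, hv⟩ <;>
    rcases hl with ⟨e₁, he₁, f₁, hf₁, hle, hv₁, hw⟩ | ⟨e₁, he₁, f₁, hf₁, hle, hv₁, hw⟩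
  · have : f = e₁ := tagL_inj (hv.symm.trans hv₁)
    exact Or.inl ⟨e, he, f₁, hf₁, hh1 hcc (this ▸ hle), hu, hw⟩
  · exact absurd (hv.symm.trans hv₁) tagL_ne_tagR
  · exact absurd (hv₁.symm.trans hv) tagL_ne_tagR
  · have : f = e₁ := tagR_inj (hv.symm.trans hv₁)
    exact Or.inr ⟨e, he, f₁, hf₁, hh2 hcc (this ▸ hle), hu, hw⟩

lemma sum_irrefl (i1 : ∀ e, ¬ E1.conf e e) (i2 : ∀ e, ¬ E2.conf e e) (u : ℕ) :
    ¬ (esSum E1 E2).conf u u := by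
  rintro (h | ⟨e, he, f, hf, (⟨h1, h2⟩ | ⟨h1, h2⟩)⟩)
  · exact tensor_irrefl i1 i2 u h
  · exact tagL_ne_tagR (h1.symm.trans h2)
  · exact tagL_ne_tagR (h2.symm.trans h1)

lemma sum_symm (s1 : ∀ {e f}, E1.conf e f → E1.conf f e)
    (s2 : ∀ {e f}, E2.conf e f → E2.conf f e) {u v : ℕ}
    (h : (esSum E1 E2).conf u v) : (esSum E1 E2).conf v u := by
  rcases h with h | ⟨e, he, f, hf, (⟨h1, h2⟩ | ⟨h1, h2⟩)⟩
  · exact Or.inl (tensor_symm s1 s2 h)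
  · exact Or.inr ⟨e, he, f, hf, Or.inr ⟨h2, h1⟩⟩
  · exact Or.inr ⟨e, he, f, hf, Or.inl ⟨h2, h1⟩⟩

lemma sum_hered (hh1 : ∀ {e f g}, E1.conf e f → E1.le f g → E1.conf e g)
    (hh2 : ∀ {e f g}, E2.conf e f → E2.le f g → E2.conf e g) {u v w : ℕ}
    (hc : (esSum E1 E2).conf u v) (hl : (esSum E1 E2).le v w) :
    (esSum E1 E2).conf u w := by
  rcases hc with h | ⟨e, he, f, hf, (⟨h1, h2⟩ | ⟨h1, h2⟩)⟩
  · exact Or.inl (tensor_hered hh1 hh2 h hl)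
  · -- u = tagL e, v = tagR f
    rcases hl with ⟨e₁, he₁, f₁, hf₁, hle, hv₁, hw⟩ | ⟨e₁, he₁, f₁, hf₁, hle, hv₁, hw⟩
    · exact absurd (hv₁.symm.trans h2) tagL_ne_tagR
    · exact Or.inr ⟨e, he, f₁, hf₁, Or.inl ⟨h1, hw⟩⟩
  · -- u = tagR f, v = tagL e
    rcases hl with ⟨e₁, he₁, f₁, hf₁, hle, hv₁, hw⟩ | ⟨e₁, he₁, f₁, hf₁, hle, hv₁, hw⟩
    · exact Or.inr ⟨f₁, hf₁, f, hf, Or.inr ⟨h1, hw⟩⟩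
    · exact absurd (h2.symm.trans hv₁) tagL_ne_tagR

lemma tensor_minLbl {A : P} :
    ((esTensor E1 E2).proj A).minLbl = (E1.proj A).minLbl ∪ (E2.proj A).minLbl := by
  ext l
  simp only [ES.minLbl, Set.mem_image, Set.mem_union]
  constructor
  · rintro ⟨u, ⟨⟨huev, husbj⟩, humin⟩, rfl⟩
    rcases mem_tensor_ev.1 huev with ⟨e, he, rfl⟩ | ⟨f, hf, rfl⟩
    · refine Or.inl ⟨e, ⟨⟨he, by rwa [tensor_lbl_tagL] at husbj⟩, ?_⟩,
        (tensor_lbl_tagL e).symm⟩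
      intro g hg hle
      have hgv : tagL g ∈ ((esTensor E1 E2).proj A).ev :=
        ⟨mem_tensor_ev.2 (Or.inl ⟨g, hg.1, rfl⟩), by
          rw [tensor_lbl_tagL]; exact hg.2⟩
      have : ((esTensor E1 E2).proj A).le (tagL g) (tagL e) :=
        ⟨tensor_le_iff.2 (Or.inl ⟨g, hg.1, e, he, hle.1, rfl, rfl⟩), hgv, huev, husbj⟩
      exact tagL_inj (humin _ hgv this)
    · refine Or.inr ⟨f, ⟨⟨hf, by rwa [tensor_lbl_tagR] at husbj⟩, ?_⟩,
        (tensor_lbl_tagR f).symm⟩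
      intro g hg hle
      have hgv : tagR g ∈ ((esTensor E1 E2).proj A).ev :=
        ⟨mem_tensor_ev.2 (Or.inr ⟨g, hg.1, rfl⟩), by
          rw [tensor_lbl_tagR]; exact hg.2⟩
      have : ((esTensor E1 E2).proj A).le (tagR g) (tagR f) :=
        ⟨tensor_le_iff.2 (Or.inr ⟨g, hg.1, f, hf, hle.1, rfl, rfl⟩), hgv, huev, husbj⟩
      exact tagR_inj (humin _ hgv this)
  · rintro (⟨e, ⟨⟨he, hs⟩, hmin⟩, rfl⟩ | ⟨f, ⟨⟨hf, hs⟩, hmin⟩, rfl⟩)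
    · have huev : tagL e ∈ ((esTensor E1 E2).proj A).ev :=
        ⟨mem_tensor_ev.2 (Or.inl ⟨e, he, rfl⟩), by rw [tensor_lbl_tagL]; exact hs⟩
      refine ⟨tagL e, ⟨huev, ?_⟩, tensor_lbl_tagL e⟩
      intro v hv hle
      obtain ⟨hle', hv', -⟩ := hle
      rcases tensor_le_iff.1 hle' with ⟨e₁, he₁, f₁, hf₁, h₁, rfl, hveq⟩ |
        ⟨e₁, he₁, f₁, hf₁, h₁, rfl, hveq⟩
      · have hfe : f₁ = e := tagL_inj hveq.symm
        have he₁p : e₁ ∈ (E1.proj A).ev := by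
          refine ⟨he₁, ?_⟩
          have := hv'.2; rwa [tensor_lbl_tagL] at this
        have : e₁ = e := hmin e₁ he₁p ⟨hfe ▸ h₁, he₁p, he, hs⟩
        rw [this]
      · exact absurd hveq tagL_ne_tagR
    · have huev : tagR f ∈ ((esTensor E1 E2).proj A).ev :=
        ⟨mem_tensor_ev.2 (Or.inr ⟨f, hf, rfl⟩), by rw [tensor_lbl_tagR]; exact hs⟩
      refine ⟨tagR f, ⟨huev, ?_⟩, tensor_lbl_tagR f⟩
      intro v hv hle
      obtain ⟨hle', hv', -⟩ := hle
      rcases tensor_le_iff.1 hle' with ⟨e₁, he₁, f₁, hf₁, h₁, rfl, hveq⟩ |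
        ⟨e₁, he₁, f₁, hf₁, h₁, rfl, hveq⟩
      · exact absurd hveq.symm tagL_ne_tagR
      · have hff : f₁ = f := tagR_inj hveq.symm
        have he₁p : e₁ ∈ (E2.proj A).ev := by
          refine ⟨he₁, ?_⟩
          have := hv'.2; rwa [tensor_lbl_tagR] at this
        have : e₁ = f := hmin e₁ he₁p ⟨hff ▸ h₁, he₁p, hf, hs⟩
        rw [this]

lemma sum_minLbl {A : P} :
    ((esSum E1 E2).proj A).minLbl = (E1.proj A).minLbl ∪ (E2.proj A).minLbl :=
  tensor_minLbl

lemma tensor_hits {Γ1 Γ2 : Set P}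
    (s1 : ∀ {e f}, E1.conf e f → E1.conf f e)
    (s2 : ∀ {e f}, E2.conf e f → E2.conf f e)
    (hits1 : ∀ x ∈ E1.MaxC, ∀ A ∈ Γ1, ∃ e ∈ x, (E1.lbl e).sbj = A)
    (hits2 : ∀ y ∈ E2.MaxC, ∀ A ∈ Γ2, ∃ f ∈ y, (E2.lbl f).sbj = A) :
    ∀ z ∈ (esTensor E1 E2).MaxC, ∀ A ∈ Γ1 ∪ Γ2,
      ∃ u ∈ z, ((esTensor E1 E2).lbl u).sbj = A := by
  intro z hz A hA
  obtain ⟨⟨hzev, hzdc, hzcf⟩, hzmax⟩ := hz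
  rcases hA with hA | hA
  · have hxcfg : E1.Config {e | e ∈ E1.ev ∧ tagL e ∈ z} := by
      refine ⟨fun e he => he.1, ?_, ?_⟩
      · intro e he g hg hle
        refine ⟨hg, hzdc _ he.2 _ (mem_tensor_ev.2 (Or.inl ⟨g, hg, rfl⟩)) ?_⟩
        exact tensor_le_iff.2 (Or.inl ⟨g, hg, e, he.1, hle, rfl, rfl⟩)
      · intro e he g hg hc
        exact hzcf _ he.2 _ hg.2 (tensor_conf_iff.2 (Or.inl
          ⟨e, he.1, g, hg.1, hc, rfl, rfl⟩))
    have hxmax : {e | e ∈ E1.ev ∧ tagL e ∈ z} ∈ E1.MaxC := by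
      refine ⟨hxcfg, ?_⟩
      intro x' hx' hsub
      have hcfg' : (esTensor E1 E2).Config (z ∪ tagL '' x') := by
        refine ⟨?_, ?_, ?_⟩
        · rintro u (hu | ⟨e, he, rfl⟩)
          · exact hzev hu
          · exact mem_tensor_ev.2 (Or.inl ⟨e, hx'.1 he, rfl⟩)
        · rintro u (hu | ⟨e, he, rfl⟩) w hw hle
          · exact Or.inl (hzdc u hu w hw hle)
          · rcases tensor_le_iff.1 hle with ⟨e₁, he₁, f₁, hf₁, hle₁, hw₁, heq⟩ |
              ⟨e₁, he₁, f₁, hf₁, hle₁, hw₁, heq⟩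
            · have : f₁ = e := tagL_inj heq.symm
              exact Or.inr ⟨e₁, hx'.2.1 e he e₁ he₁ (this ▸ hle₁), hw₁.symm⟩
            · exact absurd heq tagL_ne_tagR
        · have key : ∀ p ∈ z ∪ tagL '' x', ∀ e ∈ x',
              ¬ (esTensor E1 E2).conf p (tagL e) := by
            intro p hp e he hc
            rcases tensor_conf_iff.1 hc with ⟨e₁, he₁, f₁, hf₁, hcc, hp₁, heq⟩ |
              ⟨e₁, he₁, f₁, hf₁, hcc, hp₁, heq⟩
            · have hfe : f₁ = e := tagL_inj heq.symm
              have he₁x : e₁ ∈ x' := by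
                rcases hp with hp | ⟨g, hg, hge⟩
                · refine hsub ⟨he₁, ?_⟩; rwa [hp₁] at hp
                · cases tagL_inj (hge.trans hp₁); exact hg
              exact hx'.2.2 e₁ he₁x e he (hfe ▸ hcc)
            · exact tagL_ne_tagR heq
          intro p hp q hq hc
          rcases hq with hq | ⟨e, he, rfl⟩
          · rcases hp with hp | ⟨e, he, rfl⟩
            · exact hzcf p hp q hq hc
            · exact key q (Or.inl hq) e he (tensor_symm s1 s2 hc)
          · exact key p hp e he hc
      have hzeq := hzmax _ hcfg' Set.subset_union_left
      refine Set.Subset.antisymm ?_ hsub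
      intro e he
      exact ⟨hx'.1 he, hzeq ▸ Or.inr ⟨e, he, rfl⟩⟩
    obtain ⟨e, he, hs⟩ := hits1 _ hxmax A hA
    exact ⟨tagL e, he.2, by rw [tensor_lbl_tagL]; exact hs⟩
  · have hycfg : E2.Config {f | f ∈ E2.ev ∧ tagR f ∈ z} := by
      refine ⟨fun e he => he.1, ?_, ?_⟩
      · intro e he g hg hle
        refine ⟨hg, hzdc _ he.2 _ (mem_tensor_ev.2 (Or.inr ⟨g, hg, rfl⟩)) ?_⟩
        exact tensor_le_iff.2 (Or.inr ⟨g, hg, e, he.1, hle, rfl, rfl⟩)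
      · intro e he g hg hc
        exact hzcf _ he.2 _ hg.2 (tensor_conf_iff.2 (Or.inr
          ⟨e, he.1, g, hg.1, hc, rfl, rfl⟩))
    have hymax : {f | f ∈ E2.ev ∧ tagR f ∈ z} ∈ E2.MaxC := by
      refine ⟨hycfg, ?_⟩
      intro y' hy' hsub
      have hcfg' : (esTensor E1 E2).Config (z ∪ tagR '' y') := by
        refine ⟨?_, ?_, ?_⟩
        · rintro u (hu | ⟨e, he, rfl⟩)
          · exact hzev hu
          · exact mem_tensor_ev.2 (Or.inr ⟨e, hy'.1 he, rfl⟩)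
        · rintro u (hu | ⟨e, he, rfl⟩) w hw hle
          · exact Or.inl (hzdc u hu w hw hle)
          · rcases tensor_le_iff.1 hle with ⟨e₁, he₁, f₁, hf₁, hle₁, hw₁, heq⟩ |
              ⟨e₁, he₁, f₁, hf₁, hle₁, hw₁, heq⟩
            · exact absurd heq.symm tagL_ne_tagR
            · have : f₁ = e := tagR_inj heq.symm
              exact Or.inr ⟨e₁, hy'.2.1 e he e₁ he₁ (this ▸ hle₁), hw₁.symm⟩
        · have key : ∀ p ∈ z ∪ tagR '' y', ∀ e ∈ y',
              ¬ (esTensor E1 E2).conf p (tagR e) := by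
            intro p hp e he hc
            rcases tensor_conf_iff.1 hc with ⟨e₁, he₁, f₁, hf₁, hcc, hp₁, heq⟩ |
              ⟨e₁, he₁, f₁, hf₁, hcc, hp₁, heq⟩
            · exact tagL_ne_tagR heq.symm
            · have hfe : f₁ = e := tagR_inj heq.symm
              have he₁y : e₁ ∈ y' := by
                rcases hp with hp | ⟨g, hg, hge⟩
                · refine hsub ⟨he₁, ?_⟩; rwa [hp₁] at hp
                · cases tagR_inj (hge.trans hp₁); exact hg
              exact hy'.2.2 e₁ he₁y e he (hfe ▸ hcc)
          intro p hp q hq hc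
          rcases hq with hq | ⟨e, he, rfl⟩
          · rcases hp with hp | ⟨e, he, rfl⟩
            · exact hzcf p hp q hq hc
            · exact key q (Or.inl hq) e he (tensor_symm s1 s2 hc)
          · exact key p hp e he hc
      have hzeq := hzmax _ hcfg' Set.subset_union_left
      refine Set.Subset.antisymm ?_ hsub
      intro e he
      exact ⟨hy'.1 he, hzeq ▸ Or.inr ⟨e, he, rfl⟩⟩
    obtain ⟨f, hf, hs⟩ := hits2 _ hymax A hA
    exact ⟨tagR f, hf.2, by rw [tensor_lbl_tagR]; exact hs⟩

lemma sum_hits {Γ : Set P}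
    (s1 : ∀ {e f}, E1.conf e f → E1.conf f e)
    (s2 : ∀ {e f}, E2.conf e f → E2.conf f e)
    (hits1 : ∀ x ∈ E1.MaxC, ∀ A ∈ Γ, ∃ e ∈ x, (E1.lbl e).sbj = A)
    (hits2 : ∀ y ∈ E2.MaxC, ∀ A ∈ Γ, ∃ f ∈ y, (E2.lbl f).sbj = A) :
    ∀ z ∈ (esSum E1 E2).MaxC, ∀ A ∈ Γ, ∃ u ∈ z, ((esSum E1 E2).lbl u).sbj = A := by
  intro z hz A hA
  obtain ⟨⟨hzev, hzdc, hzcf⟩, hzmax⟩ := hz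
  by_cases hR : ∃ f ∈ E2.ev, tagR f ∈ z
  · obtain ⟨f₀, hf₀, hf₀z⟩ := hR
    have hallR : ∀ u ∈ z, ∃ f ∈ E2.ev, u = tagR f := by
      intro u hu
      rcases mem_tensor_ev.1 (hzev hu) with ⟨e, he, rfl⟩ | h
      · exact absurd (sum_conf_iff.2 (Or.inr ⟨e, he, f₀, hf₀, Or.inl ⟨rfl, rfl⟩⟩))
          (hzcf _ hu _ hf₀z)
      · exact h
    have hycfg : E2.Config {f | f ∈ E2.ev ∧ tagR f ∈ z} := by
      refine ⟨fun f hf => hf.1, ?_, ?_⟩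
      · intro f hf g hg hle
        refine ⟨hg, hzdc _ hf.2 _ (mem_tensor_ev.2 (Or.inr ⟨g, hg, rfl⟩)) ?_⟩
        exact tensor_le_iff.2 (Or.inr ⟨g, hg, f, hf.1, hle, rfl, rfl⟩)
      · intro f hf g hg hc
        exact hzcf _ hf.2 _ hg.2 (sum_conf_iff.2 (Or.inl (tensor_conf_iff.2
          (Or.inr ⟨f, hf.1, g, hg.1, hc, rfl, rfl⟩))))
    have hymax : {f | f ∈ E2.ev ∧ tagR f ∈ z} ∈ E2.MaxC := by
      refine ⟨hycfg, ?_⟩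
      intro y' hy' hsub
      have key : ∀ p ∈ z ∪ tagR '' y', ∀ e ∈ y',
          ¬ (esSum E1 E2).conf p (tagR e) := by
        intro p hp e he hc
        have hpR : ∃ g ∈ E2.ev, p = tagR g := by
          rcases hp with hp | ⟨g, hg, hge⟩
          · exact hallR p hp
          · exact ⟨g, hy'.1 hg, hge.symm⟩
        obtain ⟨g, hgE, rfl⟩ := hpR
        have hgy' : g ∈ y' := by
          rcases hp with hp | ⟨g', hg', hge⟩
          · exact hsub ⟨hgE, hp⟩
          · cases tagR_inj hge; exact hg'
        rcases sum_conf_iff.1 hc with h | ⟨e₁, he₁, f₁, hf₁, (⟨h1, h2⟩ | ⟨h1, h2⟩)⟩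
        · rcases tensor_conf_iff.1 h with ⟨e₁, he₁, f₁, hf₁, hcc, hp₁, heq⟩ |
            ⟨e₁, he₁, f₁, hf₁, hcc, hp₁, heq⟩
          · exact tagL_ne_tagR hp₁.symm
          · cases tagR_inj hp₁
            have hfe : f₁ = e := tagR_inj heq.symm
            exact hy'.2.2 _ hgy' e he (hfe ▸ hcc)
        · exact tagL_ne_tagR h1.symm
        · exact tagL_ne_tagR h2.symm
      have hcfg' : (esSum E1 E2).Config (z ∪ tagR '' y') := by
        refine ⟨?_, ?_, ?_⟩
        · rintro u (hu | ⟨f, hf, rfl⟩)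
          · exact hzev hu
          · exact mem_tensor_ev.2 (Or.inr ⟨f, hy'.1 hf, rfl⟩)
        · rintro u (hu | ⟨f, hf, rfl⟩) w hw hle
          · exact Or.inl (hzdc u hu w hw hle)
          · rcases tensor_le_iff.1 hle with ⟨e₁, he₁, f₁, hf₁, hle₁, hw₁, heq⟩ |
              ⟨e₁, he₁, f₁, hf₁, hle₁, hw₁, heq⟩
            · exact absurd heq (fun h => tagL_ne_tagR h.symm)
            · have hff : f₁ = f := tagR_inj heq.symm
              exact Or.inr ⟨e₁, hy'.2.1 f hf e₁ he₁ (hff ▸ hle₁), hw₁.symm⟩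
        · intro p hp q hq hc
          rcases hq with hq | ⟨f, hf, rfl⟩
          · rcases hp with hp | ⟨f, hf, rfl⟩
            · exact hzcf p hp q hq hc
            · exact key q (Or.inl hq) f hf (sum_symm s1 s2 hc)
          · exact key p hp f hf hc
      have hzeq := hzmax _ hcfg' Set.subset_union_left
      refine Set.Subset.antisymm ?_ hsub
      intro f hf
      exact ⟨hy'.1 hf, hzeq ▸ Or.inr ⟨f, hf, rfl⟩⟩
    obtain ⟨f, hf, hs⟩ := hits2 _ hymax A hA
    exact ⟨tagR f, hf.2, by rw [sum_lbl, tensor_lbl_tagR]; exact hs⟩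
  · have hallL : ∀ u ∈ z, ∃ e ∈ E1.ev, u = tagL e := by
      intro u hu
      rcases mem_tensor_ev.1 (hzev hu) with h | ⟨f, hf, rfl⟩
      · exact h
      · exact absurd ⟨f, hf, hu⟩ hR
    have hxcfg : E1.Config {e | e ∈ E1.ev ∧ tagL e ∈ z} := by
      refine ⟨fun e he => he.1, ?_, ?_⟩
      · intro e he g hg hle
        refine ⟨hg, hzdc _ he.2 _ (mem_tensor_ev.2 (Or.inl ⟨g, hg, rfl⟩)) ?_⟩
        exact tensor_le_iff.2 (Or.inl ⟨g, hg, e, he.1, hle, rfl, rfl⟩)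
      · intro e he g hg hc
        exact hzcf _ he.2 _ hg.2 (sum_conf_iff.2 (Or.inl (tensor_conf_iff.2
          (Or.inl ⟨e, he.1, g, hg.1, hc, rfl, rfl⟩))))
    have hxmax : {e | e ∈ E1.ev ∧ tagL e ∈ z} ∈ E1.MaxC := by
      refine ⟨hxcfg, ?_⟩
      intro x' hx' hsub
      have key : ∀ p ∈ z ∪ tagL '' x', ∀ e ∈ x',
          ¬ (esSum E1 E2).conf p (tagL e) := by
        intro p hp e he hc
        have hpL : ∃ g ∈ E1.ev, p = tagL g := by
          rcases hp with hp | ⟨g, hg, hge⟩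
          · exact hallL p hp
          · exact ⟨g, hx'.1 hg, hge.symm⟩
        obtain ⟨g, hgE, rfl⟩ := hpL
        have hgx' : g ∈ x' := by
          rcases hp with hp | ⟨g', hg', hge⟩
          · exact hsub ⟨hgE, hp⟩
          · cases tagL_inj hge; exact hg'
        rcases sum_conf_iff.1 hc with h | ⟨e₁, he₁, f₁, hf₁, (⟨h1, h2⟩ | ⟨h1, h2⟩)⟩
        · rcases tensor_conf_iff.1 h with ⟨e₁, he₁, f₁, hf₁, hcc, hp₁, heq⟩ |
            ⟨e₁, he₁, f₁, hf₁, hcc, hp₁, heq⟩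
          · cases tagL_inj hp₁
            have hfe : f₁ = e := tagL_inj heq.symm
            exact hx'.2.2 _ hgx' e he (hfe ▸ hcc)
          · exact tagL_ne_tagR hp₁
        · exact tagL_ne_tagR h2
        · exact tagL_ne_tagR h1
      have hcfg' : (esSum E1 E2).Config (z ∪ tagL '' x') := by
        refine ⟨?_, ?_, ?_⟩
        · rintro u (hu | ⟨e, he, rfl⟩)
          · exact hzev hu
          · exact mem_tensor_ev.2 (Or.inl ⟨e, hx'.1 he, rfl⟩)
        · rintro u (hu | ⟨e, he, rfl⟩) w hw hle
          · exact Or.inl (hzdc u hu w hw hle)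
          · rcases tensor_le_iff.1 hle with ⟨e₁, he₁, f₁, hf₁, hle₁, hw₁, heq⟩ |
              ⟨e₁, he₁, f₁, hf₁, hle₁, hw₁, heq⟩
            · have hfe : f₁ = e := tagL_inj heq.symm
              exact Or.inr ⟨e₁, hx'.2.1 e he e₁ he₁ (hfe ▸ hle₁), hw₁.symm⟩
            · exact absurd heq tagL_ne_tagR
        · intro p hp q hq hc
          rcases hq with hq | ⟨e, he, rfl⟩
          · rcases hp with hp | ⟨e, he, rfl⟩
            · exact hzcf p hp q hq hc
            · exact key q (Or.inl hq) e he (sum_symm s1 s2 hc)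
          · exact key p hp e he hc
      have hzeq := hzmax _ hcfg' Set.subset_union_left
      refine Set.Subset.antisymm ?_ hsub
      intro e he
      exact ⟨hx'.1 he, hzeq ▸ Or.inr ⟨e, he, rfl⟩⟩
    obtain ⟨e, he, hs⟩ := hits1 _ hxmax A hA
    exact ⟨tagL e, he.2, by rw [sum_lbl, tensor_lbl_tagL]; exact hs⟩

/-! ### Good for the base cases -/

lemma empty_good [Nonempty P] [Nonempty M] :
    Good (esEmpty : ES P M) (∅ : Set P) (∅ : Set (Label P M)) := by
  refine ⟨?_, ?_, ?_, ?_, ?_, ?_, ?_⟩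
  · exact Set.finite_empty
  · intro e h; exact h
  · intro e f h; exact h
  · intro e f g hc _; exact hc
  · intro e he; exact absurd he (Set.notMem_empty e)
  · intro x hx A hA; exact absurd hA (Set.notMem_empty A)
  · intro A
    rw [(esEmpty : ES P M).minLbl_proj_empty (fun e he => absurd he (Set.notMem_empty e))]
    ext l; simp [hat]

lemma act_good {a b : P} {m : M} (hab : a ≠ b) :
    Good (esAct a b m) {a, b} {Label.out a b m, Label.inp a b m} := by
  have hlbl0 : (esAct a b m).lbl 0 = Label.out a b m := by simp [esAct]
  have hlbl1 : (esAct a b m).lbl 1 = Label.inp a b m := by simp [esAct]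
  have hev : (esAct a b m).ev = {0, 1} := rfl
  refine ⟨?_, ?_, ?_, ?_, ?_, ?_, ?_⟩
  · rw [hev]; exact (Set.finite_singleton 1).insert 0
  · intro e h; exact h
  · intro e f h; exact h
  · intro e f g hc _; exact hc
  · intro e he
    rcases he with rfl | he
    · rw [hlbl0]; exact Or.inl rfl
    · rw [Set.mem_singleton_iff] at he
      subst he; rw [hlbl1]; exact Or.inr rfl
  · intro x hx A hA
    have hfull : ({0, 1} : Set ℕ) = x := by
      refine hx.2 {0, 1} ⟨subset_rfl, fun e _ f hf _ => hf, fun e _ f _ => not_false⟩ hx.1.1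
    rcases hA with rfl | hA
    · exact ⟨0, hfull ▸ Or.inl rfl, by rw [hlbl0]; rfl⟩
    · rw [Set.mem_singleton_iff] at hA
      subst hA
      exact ⟨1, hfull ▸ Or.inr rfl, by rw [hlbl1]; rfl⟩
  · intro A
    by_cases hAa : A = a
    · rw [hAa]
      have hpe : ((esAct a b m).proj a).ev = {0} := by
        ext e
        simp only [mem_proj_ev, Set.mem_singleton_iff]
        constructor
        · rintro ⟨(rfl | he), hs⟩
          · rfl
          · rw [Set.mem_singleton_iff] at he
            subst he; rw [hlbl1] at hs
            exact absurd hs.symm hab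
        · rintro rfl; exact ⟨Or.inl rfl, by rw [hlbl0]; rfl⟩
      have hme : ((esAct a b m).proj a).minEv = {0} := by
        ext e
        rw [mem_minEv]
        constructor
        · rintro ⟨he, -⟩; rw [← hpe]; exact he
        · rintro rfl
          refine ⟨by rw [hpe]; rfl, ?_⟩
          intro f hf _
          rw [hpe] at hf; exact hf
      have hq0 : ((esAct a b m).proj a).lbl 0 = Label.out a b m := hlbl0
      rw [ES.minLbl, hme]
      ext l
      simp only [Set.image_singleton, Set.mem_singleton_iff, hat, Set.mem_setOf_eq]
      constructor
      · rintro rfl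
        rw [hq0]
        exact ⟨Or.inl rfl, rfl⟩
      · rintro ⟨(rfl | hl), hs⟩
        · rw [hq0]
        · rw [Set.mem_singleton_iff] at hl
          subst hl
          exact absurd hs hab.symm
    · by_cases hAb : A = b
      · rw [hAb]
        have hpe : ((esAct a b m).proj b).ev = {1} := by
          ext e
          simp only [mem_proj_ev, Set.mem_singleton_iff]
          constructor
          · rintro ⟨(rfl | he), hs⟩
            · rw [hlbl0] at hs
              exact absurd hs hab
            · rw [Set.mem_singleton_iff] at he
              exact he
          · rintro rfl
            exact ⟨Or.inr rfl, by rw [hlbl1]; rfl⟩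
        have hme : ((esAct a b m).proj b).minEv = {1} := by
          ext e
          rw [mem_minEv]
          constructor
          · rintro ⟨he, -⟩; rw [← hpe]; exact he
          · rintro rfl
            refine ⟨by rw [hpe]; rfl, ?_⟩
            intro f hf _
            rw [hpe] at hf; exact hf
        have hq1 : ((esAct a b m).proj b).lbl 1 = Label.inp a b m := hlbl1
        rw [ES.minLbl, hme]
        ext l
        simp only [Set.image_singleton, Set.mem_singleton_iff, hat, Set.mem_setOf_eq]
        constructor
        · rintro rfl
          rw [hq1]
          exact ⟨Or.inr rfl, rfl⟩
        · rintro ⟨(rfl | hl), hs⟩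
          · exact absurd hs hab
          · rw [Set.mem_singleton_iff] at hl
            subst hl
            rw [hq1]
      · have hno : ∀ e ∈ (esAct a b m).ev, ((esAct a b m).lbl e).sbj ≠ A := by
          rintro e (rfl | he)
          · rw [hlbl0]; exact fun h => hAa h.symm
          · rw [Set.mem_singleton_iff] at he
            subst he; rw [hlbl1]; exact fun h => hAb h.symm
        rw [(esAct a b m).minLbl_proj_empty hno]
        ext l
        simp only [Set.mem_empty_iff_false, false_iff, hat, Set.mem_setOf_eq]
        rintro ⟨(rfl | hl), hs⟩
        · exact hAa hs.symm
        · rw [Set.mem_singleton_iff] at hl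
          subst hl
          exact hAb hs.symm

/-! ### Good for the composite cases -/

lemma seq_good {Γ1 Γ2 : Set P} {φ1 φ2 : Set (Label P M)}
    (g1 : Good E1 Γ1 φ1) (g2 : Good E2 Γ2 φ2) :
    Good (esSeq E1 E2) (Γ1 ∪ Γ2) (φ1 ∪ lminus φ2 Γ1) := by
  refine ⟨seq_fin g1.fin g2.fin, seq_irrefl g1.fin g1.irrefl g2.irrefl,
    fun h => seq_symm g1.symm g2.symm h,
    fun hc hl => seq_hered g1.fin g1.symm g1.hered g2.hered hc hl,
    ?_, seq_hits g1.fin g2.fin g1.symm g2.symm g1.hits g2.hits, ?_⟩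
  · intro u hu
    rcases mem_seq_ev.1 hu with ⟨e, he, rfl⟩ | ⟨x, hx, f, hf, rfl⟩
    · rw [seq_lbl_tagL]; exact Or.inl (g1.sbj e he)
    · rw [seq_lbl_tagC]; exact Or.inr (g2.sbj f hf)
  · intro A
    rw [hat_union]
    by_cases hA : A ∈ Γ1
    · rw [hat_lminus_of_mem hA, Set.union_empty,
        seq_minLbl_left (fun x hx => g1.hits x hx A hA), g1.minl]
    · rw [hat_lminus_of_not_mem hA]
      have h1 : hat φ1 A = ∅ := by
        rw [← g1.minl]
        exact E1.minLbl_proj_empty (fun e he hs => hA (by rw [← hs]; exact g1.sbj e he))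
      rw [h1, Set.empty_union,
        seq_minLbl_right (fun e he hs => hA (by rw [← hs]; exact g1.sbj e he))
          (E1.maxc_nonempty g1.fin), g2.minl]

lemma tensor_good {Γ1 Γ2 : Set P} {φ1 φ2 : Set (Label P M)}
    (g1 : Good E1 Γ1 φ1) (g2 : Good E2 Γ2 φ2) :
    Good (esTensor E1 E2) (Γ1 ∪ Γ2) (φ1 ∪ φ2) := by
  refine ⟨tensor_fin g1.fin g2.fin, tensor_irrefl g1.irrefl g2.irrefl,
    fun h => tensor_symm g1.symm g2.symm h,
    fun hc hl => tensor_hered g1.hered g2.hered hc hl,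
    ?_, tensor_hits g1.symm g2.symm g1.hits g2.hits, ?_⟩
  · intro u hu
    rcases mem_tensor_ev.1 hu with ⟨e, he, rfl⟩ | ⟨f, hf, rfl⟩
    · rw [tensor_lbl_tagL]; exact Or.inl (g1.sbj e he)
    · rw [tensor_lbl_tagR]; exact Or.inr (g2.sbj f hf)
  · intro A
    rw [tensor_minLbl, g1.minl, g2.minl, hat_union]

lemma sum_good {Γ : Set P} {φ1 φ2 : Set (Label P M)}
    (g1 : Good E1 Γ φ1) (g2 : Good E2 Γ φ2) :
    Good (esSum E1 E2) Γ (φ1 ∪ φ2) := by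
  refine ⟨tensor_fin g1.fin g2.fin, sum_irrefl g1.irrefl g2.irrefl,
    fun h => sum_symm g1.symm g2.symm h,
    fun hc hl => sum_hered g1.hered g2.hered hc hl,
    ?_, sum_hits g1.symm g2.symm g1.hits g2.hits, ?_⟩
  · intro u hu
    rcases mem_tensor_ev.1 hu with ⟨e, he, rfl⟩ | ⟨f, hf, rfl⟩
    · rw [sum_lbl, tensor_lbl_tagL]; exact g1.sbj e he
    · rw [sum_lbl, tensor_lbl_tagR]; exact g2.sbj f hf
  · intro A
    rw [sum_minLbl, g1.minl, g2.minl, hat_union]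

/-! ### Well-branchedness from `compch` -/

lemma minLblP_empty_of_not_mem {E : ES P M} {Γ : Set P} {φ : Set (Label P M)}
    (g : Good E Γ φ) {B : P} (hB : B ∉ Γ) : minLblP E B = ∅ :=
  E.minLbl_proj_empty (fun e he hs => hB (hs ▸ g.sbj e he))

lemma mem_of_minLblP_ne {E : ES P M} {Γ : Set P} {φ : Set (Label P M)}
    (g : Good E Γ φ) {B : P} (hB : minLblP E B ≠ ∅) : B ∈ Γ := by
  obtain ⟨l, hl⟩ := Set.nonempty_iff_ne_empty.2 hB
  obtain ⟨e, he, -⟩ := hl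
  exact he.1.2 ▸ g.sbj e he.1.1

lemma wb_of_compch {Γ : Set P} {φ1 φ2 : Set (Label P M)}
    (g1 : Good E1 Γ φ1) (g2 : Good E2 Γ φ2) (hc : compch φ1 φ2 Γ) : wb E1 E2 := by
  obtain ⟨A, hAΓ, ⟨hout, h1ne, h2ne⟩, huni, hpass⟩ := hc
  have hm1 : ∀ B, minLblP E1 B = hat φ1 B := fun B => g1.minl B
  have hm2 : ∀ B, minLblP E2 B = hat φ2 B := fun B => g2.minl B
  refine ⟨A, ⟨by rw [hm1]; exact h1ne, by rw [hm2]; exact h2ne,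
    by rw [hm1, hm2]; exact hout.1, by rw [hm1, hm2]; exact hout.2⟩, ?_, ?_⟩
  · intro A' hA'
    obtain ⟨hne1, hne2, hdisj, hsub⟩ := hA'
    have hA'Γ : A' ∈ Γ := mem_of_minLblP_ne g1 hne1
    refine huni A' hA'Γ ⟨⟨?_, ?_⟩, ?_, ?_⟩
    · rw [← hm1, ← hm2]; exact hdisj
    · rw [← hm1, ← hm2]; exact hsub
    · rw [← hm1]; exact hne1
    · rw [← hm2]; exact hne2
  · intro B hBA
    by_cases hBΓ : B ∈ Γ
    · obtain ⟨hinu, hiff⟩ := hpass B hBΓ hBA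
      exact ⟨by rw [hm1, hm2]; exact hinu.1, by rw [hm1, hm2]; exact hinu.2,
        by rw [hm1, hm2]; exact hiff⟩
    · have e1 : minLblP E1 B = ∅ := minLblP_empty_of_not_mem g1 hBΓ
      have e2 : minLblP E2 B = ∅ := minLblP_empty_of_not_mem g2 hBΓ
      refine ⟨by rw [e1]; exact Set.disjoint_left.2 (fun l h => absurd h (by simp)), ?_, ?_⟩
      · rw [e1, e2]; simp
      · rw [e1, e2]

/-! ### The master lemma -/

lemma good_sem [Nonempty P] [Nonempty M] {Γ : Set P} {G : GC P M}
    {φ Λ : Set (Label P M)} (h : Typing Γ G φ Λ) :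
    ∃ E : ES P M, gsem G = some E ∧ Good E Γ φ := by
  induction h with
  | temp => exact ⟨esEmpty, rfl, empty_good⟩
  | tint hab => exact ⟨esAct _ _ _, by simp [gsem, hab], act_good hab⟩
  | tseq h1 h2 ih1 ih2 =>
      obtain ⟨E1, he1, g1⟩ := ih1
      obtain ⟨E2, he2, g2⟩ := ih2
      exact ⟨esSeq E1 E2, by simp [gsem, he1, he2], seq_good g1 g2⟩
  | tpar h1 h2 hdisj ih1 ih2 =>
      obtain ⟨E1, he1, g1⟩ := ih1
      obtain ⟨E2, he2, g2⟩ := ih2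
      have hd : Disjoint E1.lblSet E2.lblSet := by
        rw [Set.disjoint_left]
        rintro l ⟨e, he, rfl⟩ ⟨f, hf, hlf⟩
        have h2' := g2.sbj f hf
        rw [hlf] at h2'
        have hmem := Set.mem_inter (g1.sbj e he) h2'
        rw [hdisj] at hmem
        exact hmem
      exact ⟨esTensor E1 E2, by simp [gsem, he1, he2, hd], tensor_good g1 g2⟩
  | tch h1 h2 hcomp ih1 ih2 =>
      obtain ⟨E1, he1, g1⟩ := ih1
      obtain ⟨E2, he2, g2⟩ := ih2
      have hwb : wb E1 E2 := wb_of_compch g1 g2 hcomp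
      exact ⟨esSum E1 E2, by simp [gsem, he1, he2, hwb], sum_good g1 g2⟩

end Aux

/-- Projections of sequential compositions of typable g-choreographies: the minimal
labels of `⟦G1;G2⟧↾A` come from `⟦G1⟧↾A` if `A ∈ Π1` and from `⟦G2⟧↾A` otherwise;
dually for the maximal labels. -/
theorem seq_projections {P M : Type} [Infinite P] [Infinite M]
    {Γ1 Γ2 : Set P} {G1 G2 : GC P M} {φ1 φ2 Λ1 Λ2 : Set (Label P M)}
    (h1 : Typing Γ1 G1 φ1 Λ1) (h2 : Typing Γ2 G2 φ2 Λ2) :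
    ∃ E1 E2 : ES P M, gsem G1 = some E1 ∧ gsem G2 = some E2 ∧
      gsem (GC.seq G1 G2) = some (esSeq E1 E2) ∧
      ∀ A ∈ Γ1 ∪ Γ2,
        (A ∈ Γ1 → ((esSeq E1 E2).proj A).minLbl = (E1.proj A).minLbl) ∧
        (A ∉ Γ1 → ((esSeq E1 E2).proj A).minLbl = (E2.proj A).minLbl) ∧
        (A ∈ Γ2 → ((esSeq E1 E2).proj A).maxLbl = (E2.proj A).maxLbl) ∧
        (A ∉ Γ2 → ((esSeq E1 E2).proj A).maxLbl = (E1.proj A).maxLbl) := by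
  obtain ⟨E1, he1, g1⟩ := good_sem h1
  obtain ⟨E2, he2, g2⟩ := good_sem h2
  refine ⟨E1, E2, he1, he2, by simp [gsem, he1, he2], ?_⟩
  intro A _
  refine ⟨?_, ?_, ?_, ?_⟩
  · intro hA1
    exact seq_minLbl_left (fun x hx => g1.hits x hx A hA1)
  · intro hA1
    exact seq_minLbl_right (fun e he hs => hA1 (hs ▸ g1.sbj e he))
      (E1.maxc_nonempty g1.fin)
  · intro hA2
    obtain ⟨y, hy⟩ := E2.maxc_nonempty g2.fin
    obtain ⟨f, hf, hfs⟩ := g2.hits y hy A hA2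
    exact seq_maxLbl_right ⟨f, E2.maxc_subset hy hf, hfs⟩
      (fun e he => E1.mem_maxc g1.fin g1.irrefl g1.symm g1.hered he)
      (E1.maxc_nonempty g1.fin)
  · intro hA2
    exact seq_maxLbl_left (fun f hf hs => hA2 (hs ▸ g2.sbj f hf))

end Choreo
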